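/- arXiv:1706.07687 — 2 statements merged into one kernel-verified Lean document; each statement's English description precedes it below -/
import Mathlib

section
/- Let D ⊆ ℝⁿ be an (α,c)-Hölder domain with basepoint x₀. Then every point x ∈ ∂D is the landing point of a quasihyperbolic geodesic through x₀: there exists a rectifiable path γ : [0,1] → ℝⁿ with γ(0) = x, γ(1) = x₀, γ((0,1]) ⊆ D, such that the restriction of γ to (0,1] is a quasihyperbolic geodesic in D. -/
open MeasureTheory Metric Set Filter
open scoped ENNReal NNReal Topology

/-- The distance `δ_D(x)` of `x` to the boundary of `D`. -/
noncomputable def distBoundary {n : ℕ} (D : Set (EuclideanSpace ℝ (Fin n)))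
    (x : EuclideanSpace ℝ (Fin n)) : ℝ :=
  Metric.infDist x (frontier D)

/-- The quasihyperbolic distance between two points of `D`: the infimum, over all rectifiable
paths in `D` joining `x` to `y` (parametrized by arclength, i.e. `1`-Lipschitz on `[0, L]`),
of the arclength integral of `1 / δ_D` along the path. -/
noncomputable def qhDist {n : ℕ} (D : Set (EuclideanSpace ℝ (Fin n)))
    (x y : EuclideanSpace ℝ (Fin n)) : ℝ≥0∞ :=
  ⨅ (L : ℝ) (γ : ℝ → EuclideanSpace ℝ (Fin n)) (_ : 0 ≤ L)
    (_ : LipschitzOnWith 1 γ (Icc 0 L)) (_ : γ 0 = x) (_ : γ L = y)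
    (_ : γ '' Icc 0 L ⊆ D),
    ∫⁻ t in Icc 0 L, ENNReal.ofReal (1 / distBoundary D (γ t))

/-- `D` is an `(α, c)`-Hölder domain with basepoint `x₀`: `D` is open, `x₀ ∈ D`,
`α ∈ (0, 1]`, `c > 0`, and `k_D(x, x₀) ≤ (1/α) log (δ_D(x₀) / δ_D(x)) + c` for all `x ∈ D`. -/
structure IsHolderDomain {n : ℕ} (D : Set (EuclideanSpace ℝ (Fin n))) (α c : ℝ)
    (x₀ : EuclideanSpace ℝ (Fin n)) : Prop where
  isOpen : IsOpen D
  basepoint_mem : x₀ ∈ D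
  alpha_pos : 0 < α
  alpha_le_one : α ≤ 1
  c_pos : 0 < c
  qh_bound : ∀ x ∈ D, qhDist D x x₀ ≤
    ENNReal.ofReal ((1 / α) * Real.log (distBoundary D x₀ / distBoundary D x) + c)

/-- A quasihyperbolic geodesic in `D`, parametrized by arclength on `[0, L]`: a `1`-Lipschitz
curve in `D` such that for any two points on the curve their quasihyperbolic distance equals
the integral of `1 / δ_D` over the subpath between them. -/
structure IsQHGeodesic {n : ℕ} (D : Set (EuclideanSpace ℝ (Fin n))) (L : ℝ)
    (γ : ℝ → EuclideanSpace ℝ (Fin n)) : Prop where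
  nonneg : 0 ≤ L
  lipschitz : LipschitzOnWith 1 γ (Icc 0 L)
  mem : γ '' Icc 0 L ⊆ D
  geodesic : ∀ s ∈ Icc 0 L, ∀ t ∈ Icc 0 L, s ≤ t →
    qhDist D (γ s) (γ t) = ∫⁻ u in Icc s t, ENNReal.ofReal (1 / distBoundary D (γ u))

/-- A quasihyperbolic geodesic landing at the boundary point `x` and ending at `x₀`:
a rectifiable (`1`-Lipschitz, parametrized by arclength) path `γ : [0, L] → ℝⁿ` with
`γ 0 = x`, `γ L = x₀`, whose restriction to `(0, L]` lies in `D` and is a quasihyperbolic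
geodesic of `D`. -/
def IsLandingQHGeodesic {n : ℕ} (D : Set (EuclideanSpace ℝ (Fin n)))
    (x₀ x : EuclideanSpace ℝ (Fin n)) (L : ℝ) (γ : ℝ → EuclideanSpace ℝ (Fin n)) : Prop :=
  0 < L ∧ γ 0 = x ∧ γ L = x₀ ∧ LipschitzOnWith 1 γ (Icc 0 L) ∧ γ '' Ioc 0 L ⊆ D ∧
    ∀ s ∈ Ioc 0 L, ∀ t ∈ Ioc 0 L, s ≤ t →
      qhDist D (γ s) (γ t) = ∫⁻ u in Icc s t, ENNReal.ofReal (1 / distBoundary D (γ u))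

namespace QH

variable {n : ℕ} {D : Set (EuclideanSpace ℝ (Fin n))}

lemma lipschitzWith_distBoundary : LipschitzWith 1 (distBoundary D) := by
  refine LipschitzWith.of_dist_le_mul fun x y => ?_
  rw [NNReal.coe_one, one_mul, Real.dist_eq]
  rw [abs_sub_le_iff]
  constructor
  · have h := Metric.infDist_le_infDist_add_dist (x := x) (y := y) (s := frontier D)
    simpa [distBoundary, add_comm] using h
  · have h := Metric.infDist_le_infDist_add_dist (x := y) (y := x) (s := frontier D)
    simpa [distBoundary, add_comm, dist_comm] using h

lemma continuous_distBoundary : Continuous (distBoundary D) :=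
  lipschitzWith_distBoundary.continuous

lemma distBoundary_pos (hD : IsOpen D) (hfr : (frontier D).Nonempty)
    {p : EuclideanSpace ℝ (Fin n)} (hp : p ∈ D) : 0 < distBoundary D p := by
  rw [distBoundary, ← (isClosed_frontier.notMem_iff_infDist_pos hfr)]
  intro hmem
  exact (hD.frontier_eq ▸ hmem).2 hp

lemma distBoundary_frontier {p : EuclideanSpace ℝ (Fin n)} (hp : p ∈ frontier D) :
    distBoundary D p = 0 := by
  simp [distBoundary, Metric.infDist_zero_of_mem hp]

lemma ball_subset_of_distBoundary (hD : IsOpen D) {p : EuclideanSpace ℝ (Fin n)} (hp : p ∈ D) :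
    ball p (distBoundary D p) ⊆ D := by
  by_cases h0 : 0 < distBoundary D p
  swap
  · have : ball p (distBoundary D p) = ∅ := Metric.ball_eq_empty.2 (not_lt.1 h0)
    simp [this]
  have hdisj : ∀ z ∈ ball p (distBoundary D p), z ∉ frontier D := by
    intro z hz hzf
    have h1 : distBoundary D p ≤ dist p z := Metric.infDist_le_dist_of_mem hzf
    rw [mem_ball, dist_comm] at hz
    exact absurd h1 (not_le.2 hz)
  have hcov : ball p (distBoundary D p) ⊆ D ∪ (closure D)ᶜ := by
    intro z hz
    by_cases hzD : z ∈ D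
    · exact Or.inl hzD
    · refine Or.inr fun hzc => hdisj z hz ⟨hzc, by rwa [hD.interior_eq]⟩
  have hpre := (convex_ball p (distBoundary D p)).isPreconnected
  refine IsPreconnected.subset_left_of_subset_union hD (isClosed_closure.isOpen_compl) ?_ hcov
    ⟨p, Metric.mem_ball_self h0, hp⟩ hpre
  exact disjoint_compl_right.mono_left subset_closure

section B
variable {n : ℕ} {D : Set (EuclideanSpace ℝ (Fin n))}

/-- Convert a set-lintegral over `Icc` of `ofReal f` into an interval integral. -/
lemma lintegral_Icc_ofReal {f : ℝ → ℝ} {a b : ℝ} (hab : a ≤ b)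
    (hf : ContinuousOn f (Icc a b)) (h0 : ∀ u ∈ Icc a b, 0 ≤ f u) :
    ∫⁻ u in Icc a b, ENNReal.ofReal (f u) = ENNReal.ofReal (∫ u in a..b, f u) := by
  have hint : IntegrableOn f (Icc a b) volume := hf.integrableOn_Icc
  have hae : 0 ≤ᶠ[ae (volume.restrict (Icc a b))] f :=
    (ae_restrict_iff' measurableSet_Icc).2 (Filter.Eventually.of_forall h0)
  rw [intervalIntegral.integral_of_le hab, ← MeasureTheory.integral_Icc_eq_integral_Ioc,
    MeasureTheory.ofReal_integral_eq_lintegral_ofReal hint hae]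

lemma qhDist_le {x y : EuclideanSpace ℝ (Fin n)} {L : ℝ} {γ : ℝ → EuclideanSpace ℝ (Fin n)}
    (hL : 0 ≤ L) (hlip : LipschitzOnWith 1 γ (Icc 0 L)) (h0 : γ 0 = x) (hLy : γ L = y)
    (him : γ '' Icc 0 L ⊆ D) :
    qhDist D x y ≤ ∫⁻ t in Icc 0 L, ENNReal.ofReal (1 / distBoundary D (γ t)) := by
  rw [qhDist]
  refine le_trans (iInf_le _ L) ?_
  refine le_trans (iInf_le _ γ) ?_
  exact le_trans (iInf_le _ hL) (le_trans (iInf_le _ hlip) (le_trans (iInf_le _ h0)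
    (le_trans (iInf_le _ hLy) (iInf_le _ him))))

lemma le_qhDist {x y : EuclideanSpace ℝ (Fin n)} {C : ℝ≥0∞}
    (h : ∀ (L : ℝ) (γ : ℝ → EuclideanSpace ℝ (Fin n)), 0 ≤ L →
      LipschitzOnWith 1 γ (Icc 0 L) → γ 0 = x → γ L = y → γ '' Icc 0 L ⊆ D →
      C ≤ ∫⁻ t in Icc 0 L, ENNReal.ofReal (1 / distBoundary D (γ t))) :
    C ≤ qhDist D x y := by
  rw [qhDist]
  refine le_iInf fun L => le_iInf fun γ => le_iInf fun hL => le_iInf fun hlip =>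
    le_iInf fun h0 => le_iInf fun hLy => le_iInf fun him => h L γ hL hlip h0 hLy him

lemma exists_competitor {x y : EuclideanSpace ℝ (Fin n)} {Q : ℝ≥0∞}
    (h : qhDist D x y < Q) :
    ∃ (L : ℝ) (γ : ℝ → EuclideanSpace ℝ (Fin n)), 0 ≤ L ∧
      LipschitzOnWith 1 γ (Icc 0 L) ∧ γ 0 = x ∧ γ L = y ∧ γ '' Icc 0 L ⊆ D ∧
      ∫⁻ t in Icc 0 L, ENNReal.ofReal (1 / distBoundary D (γ t)) < Q := by
  rw [qhDist] at h
  simp only [iInf_lt_iff] at h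
  obtain ⟨L, γ, hL, hlip, h0, hLy, him, hint⟩ := h
  exact ⟨L, γ, hL, hlip, h0, hLy, him, hint⟩

lemma qhDist_self {p : EuclideanSpace ℝ (Fin n)} (hp : p ∈ D) : qhDist D p p = 0 := by
  refine le_antisymm ?_ zero_le
  have h := qhDist_le (D := D) (x := p) (y := p) (L := 0) (γ := fun _ => p) le_rfl
    (((LipschitzWith.const p).weaken zero_le_one).lipschitzOnWith) rfl rfl (by simp [hp])
  refine le_trans h (le_of_eq ?_)
  have : volume (Icc (0:ℝ) 0) = 0 := by simp
  rw [setLIntegral_measure_zero _ _ this]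

/-- the restriction of an admissible curve gives an upper bound for `qhDist` between
two of its points. -/
lemma qhDist_le_subarc {γ : ℝ → EuclideanSpace ℝ (Fin n)} {s t : ℝ} (hst : s ≤ t)
    (hlip : LipschitzOnWith 1 γ (Icc s t)) (him : γ '' Icc s t ⊆ D) :
    qhDist D (γ s) (γ t) ≤ ∫⁻ u in Icc s t, ENNReal.ofReal (1 / distBoundary D (γ u)) := by
  set ρ : ℝ → EuclideanSpace ℝ (Fin n) := fun u => γ (u + s) with hρ
  have hmaps : MapsTo (fun u : ℝ => u + s) (Icc 0 (t - s)) (Icc s t) := by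
    intro u hu; simp only [mem_Icc] at hu ⊢; constructor <;> linarith [hu.1, hu.2]
  have htr : LipschitzWith 1 (fun u : ℝ => u + s) :=
    LipschitzWith.of_dist_le_mul (by
      intro a b; simp [Real.dist_eq, add_sub_add_right_eq_sub])
  have hlip' : LipschitzOnWith 1 ρ (Icc 0 (t - s)) := by
    have := hlip.comp htr.lipschitzOnWith hmaps
    simpa [hρ, Function.comp_def] using this
  have him' : ρ '' Icc 0 (t - s) ⊆ D := by
    rintro _ ⟨u, hu, rfl⟩
    exact him ⟨u + s, hmaps hu, rfl⟩
  have he0 : ρ 0 = γ s := by simp [hρ]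
  have he1 : ρ (t - s) = γ t := by simp [hρ]
  have h := qhDist_le (D := D) (L := t - s) (γ := ρ) (by linarith) hlip' he0 he1 him'
  refine le_trans h (le_of_eq ?_)
  have := (measurePreserving_add_right (volume : Measure ℝ) s).setLIntegral_comp_emb
    (measurableEmbedding_addRight s)
    (fun u => ENNReal.ofReal (1 / distBoundary D (γ u))) (Icc 0 (t - s))
  rw [this, Set.image_add_const_Icc]
  norm_num

end B

section C
variable {n : ℕ} {D : Set (EuclideanSpace ℝ (Fin n))}

lemma concat {γ₁ γ₂ : ℝ → EuclideanSpace ℝ (Fin n)} {L₁ L₂ : ℝ} (h1 : 0 ≤ L₁) (h2 : 0 ≤ L₂)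
    (lip1 : LipschitzOnWith 1 γ₁ (Icc 0 L₁)) (lip2 : LipschitzOnWith 1 γ₂ (Icc 0 L₂))
    (hend : γ₁ L₁ = γ₂ 0) :
    ∃ γ : ℝ → EuclideanSpace ℝ (Fin n), γ 0 = γ₁ 0 ∧ γ (L₁ + L₂) = γ₂ L₂ ∧
      LipschitzOnWith 1 γ (Icc 0 (L₁ + L₂)) ∧
      γ '' Icc 0 (L₁ + L₂) ⊆ γ₁ '' Icc 0 L₁ ∪ γ₂ '' Icc 0 L₂ ∧
      ∀ g : EuclideanSpace ℝ (Fin n) → ℝ≥0∞,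
        ∫⁻ u in Icc 0 (L₁ + L₂), g (γ u) =
          (∫⁻ u in Icc 0 L₁, g (γ₁ u)) + ∫⁻ u in Icc 0 L₂, g (γ₂ u) := by
  classical
  refine ⟨fun u => if u ≤ L₁ then γ₁ u else γ₂ (u - L₁), by simp [h1], ?_, ?_, ?_, ?_⟩
  · by_cases hc : L₁ + L₂ ≤ L₁
    · have hL2 : L₂ = 0 := le_antisymm (by linarith) h2
      simp [hL2, hend]
    · simp only [if_neg hc, add_sub_cancel_left]
  · rw [lipschitzOnWith_iff_dist_le_mul]
    have key : ∀ u ∈ Icc 0 (L₁ + L₂), ∀ v ∈ Icc 0 (L₁ + L₂), u ≤ v →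
        dist (if u ≤ L₁ then γ₁ u else γ₂ (u - L₁)) (if v ≤ L₁ then γ₁ v else γ₂ (v - L₁))
          ≤ v - u := by
      intro u hu v hv huv
      have d1 := lipschitzOnWith_iff_dist_le_mul.1 lip1
      have d2 := lipschitzOnWith_iff_dist_le_mul.1 lip2
      by_cases hvL : v ≤ L₁
      · rw [if_pos (le_trans huv hvL), if_pos hvL]
        have := d1 u ⟨hu.1, le_trans huv hvL⟩ v ⟨hv.1, hvL⟩
        rw [Real.dist_eq] at this
        calc dist (γ₁ u) (γ₁ v) ≤ 1 * |u - v| := this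
        _ = v - u := by rw [abs_of_nonpos (by linarith)]; ring
      · rw [if_neg hvL]
        have hvIcc : v - L₁ ∈ Icc 0 L₂ := ⟨by linarith [not_le.1 hvL], by linarith [hv.2]⟩
        by_cases huL : u ≤ L₁
        · rw [if_pos huL]
          have hA := d1 u ⟨hu.1, huL⟩ L₁ ⟨h1, le_refl _⟩
          have hB := d2 0 ⟨le_refl _, h2⟩ (v - L₁) hvIcc
          rw [Real.dist_eq] at hA hB
          calc dist (γ₁ u) (γ₂ (v - L₁))
              ≤ dist (γ₁ u) (γ₁ L₁) + dist (γ₁ L₁) (γ₂ (v - L₁)) := dist_triangle _ _ _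
          _ = dist (γ₁ u) (γ₁ L₁) + dist (γ₂ 0) (γ₂ (v - L₁)) := by rw [hend]
          _ ≤ 1 * |u - L₁| + 1 * |0 - (v - L₁)| := add_le_add hA hB
          _ = (L₁ - u) + (v - L₁) := by
              rw [abs_of_nonpos (by linarith), abs_of_nonpos (by linarith [not_le.1 hvL])]
              ring
          _ = v - u := by ring
        · rw [if_neg huL]
          have huIcc : u - L₁ ∈ Icc 0 L₂ := ⟨by linarith [not_le.1 huL], by linarith [hu.2]⟩
          have := d2 (u - L₁) huIcc (v - L₁) hvIcc
          rw [Real.dist_eq] at this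
          calc dist (γ₂ (u - L₁)) (γ₂ (v - L₁)) ≤ 1 * |u - L₁ - (v - L₁)| := this
          _ = v - u := by rw [abs_of_nonpos (by linarith)]; ring
    intro u hu v hv
    rcases le_total u v with huv | huv
    · have := key u hu v hv huv
      rw [Real.dist_eq, abs_of_nonpos (by linarith)]
      push_cast
      linarith [this]
    · have := key v hv u hu huv
      rw [dist_comm, Real.dist_eq, abs_of_nonneg (by linarith : (0:ℝ) ≤ u - v)]
      push_cast
      linarith [this]
  · rintro _ ⟨u, hu, rfl⟩
    by_cases huL : u ≤ L₁
    · exact Or.inl ⟨u, ⟨hu.1, huL⟩, by simp [huL]⟩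
    · exact Or.inr ⟨u - L₁, ⟨by linarith [not_le.1 huL], by linarith [hu.2]⟩, by simp [huL]⟩
  · intro g
    have hIcc : (Icc (0:ℝ) (L₁ + L₂)) =ᵐ[volume] (Ioc (0:ℝ) (L₁ + L₂)) :=
      (MeasureTheory.Ioc_ae_eq_Icc).symm
    rw [MeasureTheory.setLIntegral_congr hIcc,
      ← Set.Ioc_union_Ioc_eq_Ioc h1 (by linarith : L₁ ≤ L₁ + L₂),
      MeasureTheory.lintegral_union measurableSet_Ioc (Set.Ioc_disjoint_Ioc_of_le le_rfl)]
    congr 1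
    · have e1 : ∫⁻ u in Ioc 0 L₁, g (if u ≤ L₁ then γ₁ u else γ₂ (u - L₁)) =
          ∫⁻ u in Ioc 0 L₁, g (γ₁ u) :=
        MeasureTheory.setLIntegral_congr_fun measurableSet_Ioc
          (fun u hu => by rw [if_pos hu.2])
      rw [e1]
      exact MeasureTheory.setLIntegral_congr MeasureTheory.Ioc_ae_eq_Icc
    · have e2 : ∫⁻ u in Ioc L₁ (L₁ + L₂), g (if u ≤ L₁ then γ₁ u else γ₂ (u - L₁)) =
          ∫⁻ u in Ioc L₁ (L₁ + L₂), g (γ₂ (u - L₁)) :=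
        MeasureTheory.setLIntegral_congr_fun measurableSet_Ioc
          (fun u hu => by rw [if_neg (not_le.2 hu.1)])
      rw [e2]
      have hcv := (measurePreserving_add_right (volume : Measure ℝ) L₁).setLIntegral_comp_emb
        (measurableEmbedding_addRight L₁) (fun y => g (γ₂ (y - L₁))) (Ioc 0 L₂)
      have him : (fun x => x + L₁) '' Ioc 0 L₂ = Ioc L₁ (L₁ + L₂) := by
        rw [Set.image_add_const_Ioc, zero_add, add_comm L₂ L₁]
      rw [him] at hcv
      rw [← hcv]
      have e3 : ∫⁻ a in Ioc 0 L₂, g (γ₂ (a + L₁ - L₁)) = ∫⁻ a in Ioc 0 L₂, g (γ₂ a) :=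
        MeasureTheory.setLIntegral_congr_fun measurableSet_Ioc
          (fun a _ => by rw [add_sub_cancel_right])
      rw [e3]
      exact MeasureTheory.setLIntegral_congr MeasureTheory.Ioc_ae_eq_Icc

lemma qhDist_triangle (a b c' : EuclideanSpace ℝ (Fin n)) :
    qhDist D a c' ≤ qhDist D a b + qhDist D b c' := by
  refine ENNReal.le_of_forall_pos_le_add fun ε hε hfin => ?_
  have h1 : qhDist D a b ≠ ⊤ := fun h => by simp [h] at hfin
  have h2 : qhDist D b c' ≠ ⊤ := fun h => by simp [h] at hfin
  have hε2 : ((ε : ℝ≥0∞) / 2) ≠ 0 := by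
    simp [ENNReal.div_eq_zero_iff, (by exact_mod_cast hε.ne' : (ε : ℝ≥0∞) ≠ 0)]
  obtain ⟨L₁, γ₁, hL₁, lip₁, he₁0, he₁1, him₁, hint₁⟩ :=
    exists_competitor (D := D) (ENNReal.lt_add_right h1 hε2)
  obtain ⟨L₂, γ₂, hL₂, lip₂, he₂0, he₂1, him₂, hint₂⟩ :=
    exists_competitor (D := D) (ENNReal.lt_add_right h2 hε2)
  obtain ⟨γ, hγ0, hγ1, hγlip, hγim, hγint⟩ := concat hL₁ hL₂ lip₁ lip₂ (he₁1.trans he₂0.symm)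
  have := qhDist_le (D := D) (by linarith) hγlip (hγ0.trans he₁0) (hγ1.trans he₂1)
    (hγim.trans (Set.union_subset him₁ him₂))
  rw [hγint (fun z => ENNReal.ofReal (1 / distBoundary D z))] at this
  refine le_trans this ?_
  calc (∫⁻ u in Icc 0 L₁, ENNReal.ofReal (1 / distBoundary D (γ₁ u))) +
        ∫⁻ u in Icc 0 L₂, ENNReal.ofReal (1 / distBoundary D (γ₂ u))
      ≤ (qhDist D a b + (ε : ℝ≥0∞) / 2) + (qhDist D b c' + (ε : ℝ≥0∞) / 2) :=
        add_le_add hint₁.le hint₂.le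
  _ = qhDist D a b + qhDist D b c' + ε := by
      rw [add_add_add_comm, ENNReal.add_halves]

end C

section D0
variable {n : ℕ} {D : Set (EuclideanSpace ℝ (Fin n))}

lemma integral_inv_shift {A B : ℝ} (hA : 0 < A) (hB : 0 ≤ B) :
    ∫ u in (0:ℝ)..B, (A + u)⁻¹ = Real.log ((A + B) / A) := by
  have h := intervalIntegral.integral_comp_add_left (a := (0:ℝ)) (b := B)
    (fun x : ℝ => x⁻¹) A
  rw [h, add_zero, integral_inv (Set.notMem_uIcc_of_lt hA (by linarith))]

lemma integral_inv_shift' {A B : ℝ} (hA : 0 < A) (hB : 0 ≤ B) :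
    ∫ u in (0:ℝ)..B, (A + B - u)⁻¹ = Real.log ((A + B) / A) := by
  have h := intervalIntegral.integral_comp_sub_left (a := (0:ℝ)) (b := B)
    (fun x : ℝ => x⁻¹) (A + B)
  simp only [sub_zero] at h
  rw [h, add_sub_cancel_right, integral_inv (Set.notMem_uIcc_of_lt hA (by linarith))]

lemma distBoundary_le_add {γ : ℝ → EuclideanSpace ℝ (Fin n)} {L : ℝ}
    (hlip : LipschitzOnWith 1 γ (Icc 0 L)) {u v : ℝ} (hu : u ∈ Icc 0 L) (hv : v ∈ Icc 0 L) :
    distBoundary D (γ u) ≤ distBoundary D (γ v) + |u - v| := by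
  have h1 : dist (distBoundary D (γ u)) (distBoundary D (γ v)) ≤ dist (γ u) (γ v) := by
    have := lipschitzWith_distBoundary (n := n) (D := D)
    simpa using this.dist_le_mul (γ u) (γ v)
  have h2 : dist (γ u) (γ v) ≤ dist u v := by
    have := lipschitzOnWith_iff_dist_le_mul.1 hlip u hu v hv
    simpa using this
  have h3 := le_trans h1 h2
  rw [Real.dist_eq, Real.dist_eq] at h3
  linarith [(abs_sub_le_iff.1 h3).1]

lemma qhDist_ge_log_start (hD : IsOpen D) (hfr : (frontier D).Nonempty)
    {p q : EuclideanSpace ℝ (Fin n)} :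
    ENNReal.ofReal (Real.log (distBoundary D q / distBoundary D p)) ≤ qhDist D p q := by
  refine le_qhDist fun L γ hL hlip h0 hL1 him => ?_
  have hp : p ∈ D := him ⟨0, ⟨le_refl _, hL⟩, h0⟩
  have hq : q ∈ D := him ⟨L, ⟨hL, le_refl _⟩, hL1⟩
  have hδp : 0 < distBoundary D p := distBoundary_pos hD hfr hp
  have hδq : 0 < distBoundary D q := distBoundary_pos hD hfr hq
  have hbb : ∀ u ∈ Icc 0 L, distBoundary D (γ u) ≤ distBoundary D p + u := by
    intro u hu
    have := distBoundary_le_add (D := D) hlip hu ⟨le_refl _, hL⟩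
    rw [h0] at this
    refine le_trans this (by rw [abs_of_nonneg (by linarith [hu.1])]; linarith [hu.1])
  have hmono : ∫⁻ u in Icc 0 L, ENNReal.ofReal ((distBoundary D p + u)⁻¹)
      ≤ ∫⁻ u in Icc 0 L, ENNReal.ofReal (1 / distBoundary D (γ u)) := by
    refine MeasureTheory.lintegral_mono_ae ((ae_restrict_iff' measurableSet_Icc).2
      (Filter.Eventually.of_forall fun u hu => ?_))
    have hpos : 0 < distBoundary D (γ u) :=
      distBoundary_pos hD hfr (him ⟨u, hu, rfl⟩)
    rw [one_div]
    exact ENNReal.ofReal_le_ofReal (inv_anti₀ hpos (hbb u hu))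
  refine le_trans ?_ hmono
  have hcont : ContinuousOn (fun u : ℝ => (distBoundary D p + u)⁻¹) (Icc 0 L) :=
    ContinuousOn.inv₀ (continuous_const.add continuous_id').continuousOn
      (fun u hu => ne_of_gt (by linarith [hu.1]))
  have hnn : ∀ u ∈ Icc 0 L, 0 ≤ (distBoundary D p + u)⁻¹ := fun u hu => by
    have h2 : 0 < distBoundary D p + u := by linarith [hu.1]
    positivity
  rw [lintegral_Icc_ofReal (f := fun u : ℝ => (distBoundary D p + u)⁻¹) hL hcont hnn,
    integral_inv_shift hδp hL]
  refine ENNReal.ofReal_le_ofReal ?_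
  have h1 : distBoundary D q ≤ distBoundary D p + L := by
    have := hbb L ⟨hL, le_refl _⟩
    rw [hL1] at this; exact this
  rw [Real.log_le_log_iff (by positivity) (by positivity)]
  gcongr

lemma qhDist_ge_log_end (hD : IsOpen D) (hfr : (frontier D).Nonempty)
    {p q : EuclideanSpace ℝ (Fin n)} :
    ENNReal.ofReal (Real.log (distBoundary D p / distBoundary D q)) ≤ qhDist D p q := by
  refine le_qhDist fun L γ hL hlip h0 hL1 him => ?_
  have hp : p ∈ D := him ⟨0, ⟨le_refl _, hL⟩, h0⟩
  have hq : q ∈ D := him ⟨L, ⟨hL, le_refl _⟩, hL1⟩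
  have hδp : 0 < distBoundary D p := distBoundary_pos hD hfr hp
  have hδq : 0 < distBoundary D q := distBoundary_pos hD hfr hq
  have hbb : ∀ u ∈ Icc 0 L, distBoundary D (γ u) ≤ distBoundary D q + L - u := by
    intro u hu
    have := distBoundary_le_add (D := D) hlip hu ⟨hL, le_refl _⟩
    rw [hL1] at this
    refine le_trans this (by rw [abs_of_nonpos (by linarith [hu.2])]; linarith [hu.2])
  have hmono : ∫⁻ u in Icc 0 L, ENNReal.ofReal ((distBoundary D q + L - u)⁻¹)
      ≤ ∫⁻ u in Icc 0 L, ENNReal.ofReal (1 / distBoundary D (γ u)) := by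
    refine MeasureTheory.lintegral_mono_ae ((ae_restrict_iff' measurableSet_Icc).2
      (Filter.Eventually.of_forall fun u hu => ?_))
    have hpos : 0 < distBoundary D (γ u) :=
      distBoundary_pos hD hfr (him ⟨u, hu, rfl⟩)
    rw [one_div]
    exact ENNReal.ofReal_le_ofReal (inv_anti₀ hpos (hbb u hu))
  refine le_trans ?_ hmono
  have hcont : ContinuousOn (fun u : ℝ => (distBoundary D q + L - u)⁻¹) (Icc 0 L) :=
    ContinuousOn.inv₀ (continuous_const.sub continuous_id').continuousOn
      (fun u hu => ne_of_gt (by linarith [hu.2]))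
  have hnn : ∀ u ∈ Icc 0 L, 0 ≤ (distBoundary D q + L - u)⁻¹ := fun u hu => by
    have h2 : 0 < distBoundary D q + L - u := by linarith [hu.2]
    positivity
  rw [lintegral_Icc_ofReal (f := fun u : ℝ => (distBoundary D q + L - u)⁻¹) hL hcont hnn,
    integral_inv_shift' hδq hL]
  refine ENNReal.ofReal_le_ofReal ?_
  have h1 : distBoundary D p ≤ distBoundary D q + L := by
    have := hbb 0 ⟨le_refl _, hL⟩
    rw [h0] at this; linarith [this]
  rw [Real.log_le_log_iff (by positivity) (by positivity)]
  gcongr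

end D0

section E0
variable {n : ℕ} {D : Set (EuclideanSpace ℝ (Fin n))}

lemma qhDist_segment (hD : IsOpen D) (hfr : (frontier D).Nonempty)
    {p q : EuclideanSpace ℝ (Fin n)} (hp : p ∈ D) (hq : dist p q < distBoundary D p) :
    qhDist D p q ≤
      ENNReal.ofReal (Real.log (distBoundary D p / (distBoundary D p - dist p q))) := by
  set δp := distBoundary D p with hδp
  have hδppos : 0 < δp := distBoundary_pos hD hfr hp
  rcases eq_or_ne p q with rfl | hne
  · rw [qhDist_self hp]; exact zero_le
  have hd : 0 < dist p q := dist_pos.2 hne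
  set d := dist p q with hdd
  set γ : ℝ → EuclideanSpace ℝ (Fin n) := fun u => p + (u / d) • (q - p) with hγ
  have hdist : ∀ u v : ℝ, dist (γ u) (γ v) = |u - v| := by
    intro u v
    rw [hγ, dist_eq_norm]
    have : p + (u / d) • (q - p) - (p + (v / d) • (q - p)) = ((u - v) / d) • (q - p) := by
      rw [sub_div, sub_smul]; abel
    rw [this, norm_smul]
    rw [norm_div, Real.norm_eq_abs, Real.norm_eq_abs, abs_of_pos hd]
    have hqp : ‖q - p‖ = d := by rw [← dist_eq_norm, dist_comm, hdd]
    rw [hqp]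
    field_simp
  have hlip : LipschitzOnWith 1 γ (Icc 0 d) := by
    rw [lipschitzOnWith_iff_dist_le_mul]
    intro u _ v _
    rw [hdist u v, Real.dist_eq]
    simp
  have hdp : ∀ u ∈ Icc (0:ℝ) d, dist (γ u) p = u := by
    intro u hu
    have : γ 0 = p := by simp [hγ]
    rw [← this, hdist u 0, sub_zero, abs_of_nonneg hu.1]
  have him : γ '' Icc 0 d ⊆ D := by
    rintro _ ⟨u, hu, rfl⟩
    refine ball_subset_of_distBoundary hD hp ?_
    rw [mem_ball, hdp u hu]
    exact lt_of_le_of_lt hu.2 hq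
  have hbb : ∀ u ∈ Icc (0:ℝ) d, δp - u ≤ distBoundary D (γ u) := by
    intro u hu
    have h1 : dist (distBoundary D (γ u)) (distBoundary D p) ≤ dist (γ u) p := by
      have := lipschitzWith_distBoundary (n := n) (D := D)
      simpa using this.dist_le_mul (γ u) p
    rw [hdp u hu, Real.dist_eq] at h1
    linarith [(abs_sub_le_iff.1 h1).2]
  have he0 : γ 0 = p := by simp [hγ]
  have he1 : γ d = q := by
    rw [hγ]; simp only []
    rw [div_self (ne_of_gt hd), one_smul]
    abel
  have hmain := qhDist_le (D := D) (le_of_lt hd) hlip he0 he1 him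
  refine le_trans hmain ?_
  have hmono : ∫⁻ u in Icc 0 d, ENNReal.ofReal (1 / distBoundary D (γ u))
      ≤ ∫⁻ u in Icc 0 d, ENNReal.ofReal ((δp - u)⁻¹) := by
    refine MeasureTheory.lintegral_mono_ae ((ae_restrict_iff' measurableSet_Icc).2
      (Filter.Eventually.of_forall fun u hu => ?_))
    have hpos : 0 < δp - u := by linarith [hu.2]
    rw [one_div]
    exact ENNReal.ofReal_le_ofReal (inv_anti₀ hpos (hbb u hu))
  refine le_trans hmono ?_
  have hcont : ContinuousOn (fun u : ℝ => (δp - u)⁻¹) (Icc 0 d) :=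
    ContinuousOn.inv₀ (continuous_const.sub continuous_id').continuousOn
      (fun u hu => ne_of_gt (by linarith [hu.2]))
  have hnn : ∀ u ∈ Icc (0:ℝ) d, 0 ≤ (δp - u)⁻¹ := fun u hu => by
    have h2 : 0 < δp - u := by linarith [hu.2]
    positivity
  rw [lintegral_Icc_ofReal (f := fun u : ℝ => (δp - u)⁻¹) (le_of_lt hd) hcont hnn]
  refine ENNReal.ofReal_le_ofReal (le_of_eq ?_)
  have := integral_inv_shift' (A := δp - d) (B := d) (by linarith) (le_of_lt hd)
  rw [sub_add_cancel] at this
  rw [← this]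

end E0

section F0
variable {n : ℕ} {D : Set (EuclideanSpace ℝ (Fin n))} {α c : ℝ}
  {x₀ : EuclideanSpace ℝ (Fin n)}

set_option maxHeartbeats 1000000 in
theorem near_min_estimates (H : IsHolderDomain D α c x₀) (hfr : (frontier D).Nonempty)
    {σ : ℝ → EuclideanSpace ℝ (Fin n)} {T ε : ℝ}
    (hT : 0 ≤ T) (hε : 0 < ε) (hε1 : ε ≤ 1)
    (hlip : LipschitzWith 1 σ) (hmem : ∀ u, σ u ∈ D) (hend : σ T = x₀)
    (hnear : ∫⁻ u in Icc 0 T, ENNReal.ofReal (1 / distBoundary D (σ u)) ≤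
      qhDist D (σ 0) x₀ + ENNReal.ofReal ε) :
    T ≤ distBoundary D x₀ * Real.exp (α * (c + 1)) / α ∧
      ∀ s, 0 < s → s ≤ T →
        distBoundary D x₀ * Real.exp (-(1/α) * Real.log
          (distBoundary D x₀ * Real.exp (α * (c + 1)) / (α * s))) ≤ distBoundary D (σ s) := by
  have hα : 0 < α := H.alpha_pos
  have hc : 0 < c := H.c_pos
  set δ₀ := distBoundary D x₀ with hδ₀
  have hδ₀pos : 0 < δ₀ := distBoundary_pos H.isOpen hfr H.basepoint_mem
  set K₁ := δ₀ * Real.exp (α * (c + 1)) with hK₁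
  have hK₁pos : 0 < K₁ := by positivity
  set h : ℝ → ℝ := fun u => distBoundary D (σ u) with hh
  have hhu : ∀ u, distBoundary D (σ u) = h u := fun _ => rfl
  have hcont : Continuous h := continuous_distBoundary.comp hlip.continuous
  have hhpos : ∀ u, 0 < h u := fun u => distBoundary_pos H.isOpen hfr (hmem u)
  have hinv : Continuous fun u => (h u)⁻¹ := hcont.inv₀ fun u => ne_of_gt (hhpos u)
  set F : ℝ → ℝ := fun u => ∫ v in (0:ℝ)..u, (h v)⁻¹ with hF
  have hFderiv : ∀ u, HasDerivAt F (h u)⁻¹ u := fun u =>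
    intervalIntegral.integral_hasDerivAt_right (hinv.intervalIntegrable _ _)
      (hinv.stronglyMeasurableAtFilter _ _) hinv.continuousAt
  have hFcont : Continuous F :=
    continuous_iff_continuousAt.2 fun u => (hFderiv u).continuousAt
  have hFsub : ∀ a b : ℝ, F b - F a = ∫ v in a..b, (h v)⁻¹ := fun a b => by
    rw [hF]
    exact intervalIntegral.integral_interval_sub_left (hinv.intervalIntegrable _ _)
      (hinv.intervalIntegrable _ _)
  have hFmono : ∀ a b : ℝ, a ≤ b → F a ≤ F b := by
    intro a b hab
    have h0 : 0 ≤ ∫ v in a..b, (h v)⁻¹ :=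
      intervalIntegral.integral_nonneg hab fun u _ => (inv_pos.2 (hhpos u)).le
    have := hFsub a b
    linarith
  have hF0 : F 0 = 0 := by rw [hF]; simp
  have hIcc : ∀ a b : ℝ, a ≤ b →
      ∫⁻ u in Icc a b, ENNReal.ofReal (1 / distBoundary D (σ u)) =
        ENNReal.ofReal (F b - F a) := by
    intro a b hab
    rw [hFsub a b]
    calc ∫⁻ u in Icc a b, ENNReal.ofReal (1 / distBoundary D (σ u))
        = ∫⁻ u in Icc a b, ENNReal.ofReal ((h u)⁻¹) := by simp_rw [one_div, hhu]
    _ = ENNReal.ofReal (∫ v in a..b, (h v)⁻¹) :=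
        lintegral_Icc_ofReal hab hinv.continuousOn (fun u _ => (inv_pos.2 (hhpos u)).le)
  have hsub : ∀ a b : ℝ, a ≤ b → qhDist D (σ a) (σ b) ≤ ENNReal.ofReal (F b - F a) := by
    intro a b hab
    rw [← hIcc a b hab]
    exact qhDist_le_subarc hab hlip.lipschitzOnWith (by rintro _ ⟨u, _, rfl⟩; exact hmem u)
  set κ := qhDist D (σ 0) x₀ with hκ
  have hκfin : κ ≠ ⊤ :=
    ne_top_of_le_ne_top ENNReal.ofReal_ne_top (H.qh_bound (σ 0) (hmem 0))
  have hFT : ENNReal.ofReal (F T) ≤ κ + ENNReal.ofReal ε := by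
    have hiT := hIcc 0 T hT
    rw [hF0, sub_zero] at hiT
    rw [← hiT]; exact hnear
  have claimA : ∀ u, 0 ≤ u → u ≤ T → h u ≤ K₁ * Real.exp (-α * (F T - F u)) := by
    intro u hu0 huT
    have hτ0 : 0 ≤ F T - F u := by have := hFmono u T huT; linarith
    have hkfin : qhDist D (σ u) x₀ ≠ ⊤ :=
      ne_top_of_le_ne_top ENNReal.ofReal_ne_top (H.qh_bound (σ u) (hmem u))
    have htri : κ ≤ ENNReal.ofReal (F u) + qhDist D (σ u) x₀ := by
      refine le_trans (qhDist_triangle (σ 0) (σ u) x₀) (add_le_add_left ?_ _)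
      have := hsub 0 u hu0
      rwa [hF0, sub_zero] at this
    have h1 : ENNReal.ofReal (F T) ≤ ENNReal.ofReal (F u) + qhDist D (σ u) x₀ +
        ENNReal.ofReal ε := le_trans hFT (add_le_add_left htri _)
    have hRfin : ENNReal.ofReal (F u) + qhDist D (σ u) x₀ + ENNReal.ofReal ε ≠ ⊤ := by
      refine ENNReal.add_ne_top.2 ⟨ENNReal.add_ne_top.2 ⟨ENNReal.ofReal_ne_top, hkfin⟩,
        ENNReal.ofReal_ne_top⟩
    have hFunn : 0 ≤ F u := by have := hFmono 0 u hu0; linarith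
    have hFTnn : 0 ≤ F T := by have := hFmono 0 T hT; linarith
    have h2 := ENNReal.toReal_mono hRfin h1
    rw [ENNReal.toReal_ofReal hFTnn, ENNReal.toReal_add
        (ENNReal.add_ne_top.2 ⟨ENNReal.ofReal_ne_top, hkfin⟩) ENNReal.ofReal_ne_top,
      ENNReal.toReal_add ENNReal.ofReal_ne_top hkfin, ENNReal.toReal_ofReal hFunn,
      ENNReal.toReal_ofReal hε.le] at h2
    -- h2 : F T ≤ F u + (qhDist D (σ u) x₀).toReal + ε
    have hk2 : qhDist D (σ u) x₀ ≤
        ENNReal.ofReal ((1 / α) * Real.log (δ₀ / h u) + c) := H.qh_bound (σ u) (hmem u)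
    by_cases hA : 0 ≤ (1 / α) * Real.log (δ₀ / h u) + c
    · have hk3 : (qhDist D (σ u) x₀).toReal ≤ (1 / α) * Real.log (δ₀ / h u) + c := by
        have := ENNReal.toReal_mono ENNReal.ofReal_ne_top hk2
        rwa [ENNReal.toReal_ofReal hA] at this
      have hτle : α * (F T - F u) - α * (c + 1) ≤ Real.log (δ₀ / h u) := by
        have hαε : α * ε ≤ α * 1 := by nlinarith
        have := mul_le_mul_of_nonneg_left (by linarith [h2, hk3] :
          F T - F u ≤ (1 / α) * Real.log (δ₀ / h u) + c + ε) hα.le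
        have hinvα : α * ((1 / α) * Real.log (δ₀ / h u)) = Real.log (δ₀ / h u) := by
          rw [← mul_assoc, mul_one_div, div_self hα.ne', one_mul]
        nlinarith [this, hinvα]
      have hexp : Real.exp (α * (F T - F u) - α * (c + 1)) ≤ δ₀ / h u :=
        (Real.le_log_iff_exp_le (div_pos hδ₀pos (hhpos u))).1 hτle
      have hmul : h u * Real.exp (α * (F T - F u) - α * (c + 1)) ≤ δ₀ := by
        rw [div_eq_mul_inv] at hexp
        have := mul_le_mul_of_nonneg_left hexp (hhpos u).le
        calc h u * Real.exp (α * (F T - F u) - α * (c + 1)) ≤ h u * (δ₀ * (h u)⁻¹) := this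
        _ = δ₀ := by
            rw [mul_comm, mul_assoc, inv_mul_cancel₀ (ne_of_gt (hhpos u)), mul_one]
      have : h u ≤ δ₀ / Real.exp (α * (F T - F u) - α * (c + 1)) :=
        (le_div_iff₀ (Real.exp_pos _)).2 hmul
      refine le_trans this (le_of_eq ?_)
      rw [div_eq_mul_inv, ← Real.exp_neg, hK₁, mul_assoc, ← Real.exp_add]
      ring_nf
    · have hk0 : qhDist D (σ u) x₀ = 0 := by
        have : ENNReal.ofReal ((1 / α) * Real.log (δ₀ / h u) + c) = 0 :=
          ENNReal.ofReal_eq_zero.2 (le_of_not_ge hA)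
        exact le_antisymm (this ▸ hk2) zero_le
      have hτε : F T - F u ≤ ε := by
        rw [hk0] at h2; simp at h2; linarith
      have hlow : ENNReal.ofReal (Real.log (h u / δ₀)) ≤ qhDist D (σ u) x₀ := by
        have := qhDist_ge_log_end (D := D) H.isOpen hfr (p := σ u) (q := x₀)
        rwa [← hδ₀, hhu u] at this
      rw [hk0] at hlow
      have hle1 : h u ≤ δ₀ := by
        have hlog : Real.log (h u / δ₀) ≤ 0 :=
          ENNReal.ofReal_eq_zero.1 (le_zero_iff.1 hlow)
        have := (Real.log_nonpos_iff (div_pos (hhpos u) hδ₀pos).le).1 hlog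
        have hc2 : (h u / δ₀) * δ₀ = h u := div_mul_cancel₀ _ (ne_of_gt hδ₀pos)
        calc h u = (h u / δ₀) * δ₀ := hc2.symm
        _ ≤ 1 * δ₀ := by nlinarith
        _ = δ₀ := one_mul _
      refine le_trans hle1 ?_
      rw [hK₁, mul_assoc, ← Real.exp_add]
      have hexpge : (1:ℝ) ≤ Real.exp (α * (c + 1) + -α * (F T - F u)) := by
        refine Real.one_le_exp ?_
        nlinarith [mul_le_mul_of_nonneg_left hτε hα.le,
          mul_le_mul_of_nonneg_left hε1 hα.le, mul_pos hα hc]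
      nlinarith [mul_le_mul_of_nonneg_left hexpge hδ₀pos.le]
  -- the exponential integral estimate
  set G : ℝ → ℝ := fun u => Real.exp (-α * (F T - F u)) with hG
  have hGpos : ∀ u, 0 < G u := fun u => Real.exp_pos _
  have hGderiv : ∀ u, HasDerivAt G (G u * (α * (h u)⁻¹)) u := by
    intro u
    have h2 : HasDerivAt (fun w => F T - F w) (-(h u)⁻¹) u := (hFderiv u).const_sub (F T)
    have h1 : HasDerivAt (fun w => -α * (F T - F w)) (α * (h u)⁻¹) u := by
      have := h2.const_mul (-α)
      exact this.congr_deriv (by ring)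
    exact h1.exp
  have hGcont : Continuous G :=
    Real.continuous_exp.comp (continuous_const.mul (continuous_const.sub hFcont))
  have hkey : ∀ s, 0 ≤ s → s ≤ T → s ≤ K₁ / α * G s := by
    intro s hs0 hsT
    have hptwise : ∀ u ∈ Icc (0:ℝ) s, (1:ℝ) ≤ K₁ / α * (G u * (α * (h u)⁻¹)) := by
      intro u hu
      have hcA : h u ≤ K₁ * G u := claimA u hu.1 (le_trans hu.2 hsT)
      have he : K₁ / α * (G u * (α * (h u)⁻¹)) = (K₁ * G u) * (h u)⁻¹ := by
        field_simp
      rw [he]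
      calc (1:ℝ) = h u * (h u)⁻¹ := (mul_inv_cancel₀ (ne_of_gt (hhpos u))).symm
      _ ≤ (K₁ * G u) * (h u)⁻¹ :=
          mul_le_mul_of_nonneg_right hcA (inv_nonneg.2 (hhpos u).le)
    have hint : ∫ u in (0:ℝ)..s, (1:ℝ) ≤
        ∫ u in (0:ℝ)..s, K₁ / α * (G u * (α * (h u)⁻¹)) := by
      refine intervalIntegral.integral_mono_on hs0 (intervalIntegrable_const)
        (((continuous_const.mul (hGcont.mul (continuous_const.mul hinv)))).intervalIntegrable _ _)
        hptwise
    have hFTC : ∫ u in (0:ℝ)..s, G u * (α * (h u)⁻¹) = G s - G 0 :=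
      intervalIntegral.integral_eq_sub_of_hasDerivAt (fun u _ => hGderiv u)
        ((hGcont.mul (continuous_const.mul hinv)).intervalIntegrable _ _)
    rw [intervalIntegral.integral_const, smul_eq_mul, mul_one,
      intervalIntegral.integral_const_mul, hFTC] at hint
    have h0 : s - 0 ≤ K₁ / α * (G s - G 0) := by simpa using hint
    nlinarith [hGpos 0, mul_pos (div_pos hK₁pos hα) (hGpos 0)]
  constructor
  · have := hkey T hT le_rfl
    have hGT : G T = 1 := by rw [hG]; simp
    rw [hGT, mul_one] at this
    exact this
  · intro s hs0 hsT
    have hτ0 : 0 ≤ F T - F s := by have := hFmono s T hsT; linarith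
    have hks := hkey s hs0.le hsT
    have hexp1 : Real.exp (α * (F T - F s)) * (α * s) ≤ K₁ := by
      have h1 := mul_le_mul_of_nonneg_right hks (Real.exp_pos (α * (F T - F s))).le
      have h2 : G s * Real.exp (α * (F T - F s)) = 1 := by
        rw [hG, ← Real.exp_add]
        ring_nf
        exact Real.exp_zero
      have h3 : K₁ / α * G s * Real.exp (α * (F T - F s)) = K₁ / α := by
        rw [mul_assoc, h2, mul_one]
      rw [h3] at h1
      -- h1 : s * exp(ατ) ≤ K₁/α
      have h4 := mul_le_mul_of_nonneg_left h1 hα.le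
      calc Real.exp (α * (F T - F s)) * (α * s)
          = α * (s * Real.exp (α * (F T - F s))) := by ring
      _ ≤ α * (K₁ / α) := h4
      _ = K₁ := by rw [mul_comm, div_mul_cancel₀ _ hα.ne']
    have hquot : Real.exp (α * (F T - F s)) ≤ K₁ / (α * s) := by
      rw [le_div_iff₀ (mul_pos hα hs0)]
      exact hexp1
    have hlogineq : α * (F T - F s) ≤ Real.log (K₁ / (α * s)) :=
      (Real.le_log_iff_exp_le (div_pos hK₁pos (mul_pos hα hs0))).2 hquot
    -- lower bound on h s
    have hlow : ENNReal.ofReal (Real.log (δ₀ / h s)) ≤ qhDist D (σ s) x₀ := by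
      have := qhDist_ge_log_start (D := D) H.isOpen hfr (p := σ s) (q := x₀)
      rwa [← hδ₀, hhu s] at this
    have hup : qhDist D (σ s) x₀ ≤ ENNReal.ofReal (F T - F s) := by
      have := hsub s T hsT
      rwa [hend] at this
    have hlog2 : Real.log (δ₀ / h s) ≤ F T - F s :=
      (ENNReal.ofReal_le_ofReal_iff hτ0).1 (le_trans hlow hup)
    have hlog3 : Real.log (δ₀ / h s) ≤ (1 / α) * Real.log (K₁ / (α * s)) := by
      have h5 : α * Real.log (δ₀ / h s) ≤ α * (F T - F s) :=
        mul_le_mul_of_nonneg_left hlog2 hα.le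
      have h6 : α * Real.log (δ₀ / h s) ≤ Real.log (K₁ / (α * s)) :=
        le_trans h5 hlogineq
      have h7 := mul_le_mul_of_nonneg_left h6 (one_div_nonneg.2 hα.le)
      have hc3 : (1 / α) * (α * Real.log (δ₀ / h s)) = Real.log (δ₀ / h s) := by
        rw [← mul_assoc, one_div, inv_mul_cancel₀ hα.ne', one_mul]
      calc Real.log (δ₀ / h s) = (1 / α) * (α * Real.log (δ₀ / h s)) := hc3.symm
      _ ≤ (1 / α) * Real.log (K₁ / (α * s)) := h7
    have hexp2 : δ₀ / h s ≤ Real.exp ((1 / α) * Real.log (K₁ / (α * s))) :=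
      (Real.log_le_iff_le_exp (div_pos hδ₀pos (hhpos s))).1 hlog3
    have hfin : δ₀ ≤ h s * Real.exp ((1 / α) * Real.log (K₁ / (α * s))) := by
      have := mul_le_mul_of_nonneg_left hexp2 (hhpos s).le
      have hc4 : h s * (δ₀ / h s) = δ₀ := by
        rw [mul_comm, div_mul_cancel₀ _ (ne_of_gt (hhpos s))]
      calc δ₀ = h s * (δ₀ / h s) := hc4.symm
      _ ≤ h s * Real.exp ((1 / α) * Real.log (K₁ / (α * s))) := this
    rw [neg_mul, Real.exp_neg]
    rw [← div_le_iff₀ (Real.exp_pos _)] at hfin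
    show δ₀ * (Real.exp ((1 / α) * Real.log (K₁ / (α * s))))⁻¹ ≤ h s
    rw [← div_eq_mul_inv]
    exact hfin
end F0

section G0

lemma eventually_integral_le {U : Filter ℕ} {ψ : ℕ → ℝ → ℝ} {g : ℝ → ℝ} {s t C : ℝ}
    (hst : s < t) (hC : 0 < C)
    (hlip : ∀ᶠ j in U, LipschitzOnWith (Real.toNNReal C) (ψ j) (Icc s t))
    (hglip : LipschitzOnWith (Real.toNNReal C) g (Icc s t))
    (hlim : ∀ u ∈ Icc s t, Tendsto (fun j => ψ j u) U (𝓝 (g u)))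
    {ε : ℝ} (hε : 0 < ε) :
    ∀ᶠ j in U, ∫ u in s..t, g u ≤ (∫ u in s..t, ψ j u) + ε := by
  have hCcoe : ((Real.toNNReal C : ℝ≥0) : ℝ) = C := Real.coe_toNNReal _ hC.le
  set M := t - s with hM
  have hMpos : 0 < M := by simp [hM]; linarith
  obtain ⟨N, hNgt⟩ := exists_nat_gt (2 * C * M * M / (ε / 2))
  have hN0 : 0 < (N : ℝ) := lt_of_le_of_lt (by positivity) hNgt
  set mesh := M / N with hmeshdef
  have hmeshpos : 0 < mesh := div_pos hMpos hN0
  have hmesh : 2 * C * M * mesh ≤ ε / 2 := by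
    rw [hmeshdef, mul_div_assoc']
    rw [div_le_iff₀ hN0]
    have := (div_lt_iff₀ (by positivity : (0:ℝ) < ε / 2)).1 hNgt
    nlinarith [this]
  set A := ε / (2 * (M + 1)) with hAdef
  have hApos : 0 < A := by
    refine div_pos hε (by nlinarith)
  set net : ℕ → ℝ := fun i => s + mesh * i with hnet
  have hnetmem : ∀ i : ℕ, i ≤ N → net i ∈ Icc s t := by
    intro i hi
    have h1 : 0 ≤ mesh * i := by positivity
    have h2 : mesh * i ≤ mesh * N := by
      refine mul_le_mul_of_nonneg_left ?_ hmeshpos.le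
      exact_mod_cast hi
    have h3 : mesh * N = M := by
      rw [hmeshdef]; field_simp
    constructor
    · simp [hnet]; linarith
    · simp [hnet]; nlinarith [h2, h3]
  have hnear : ∀ u ∈ Icc s t, ∃ i ≤ N, |u - net i| ≤ mesh := by
    intro u hu
    set i := ⌊(u - s) / mesh⌋₊ with hi
    have hr0 : 0 ≤ (u - s) / mesh := div_nonneg (by linarith [hu.1]) hmeshpos.le
    have hfl1 : (i : ℝ) ≤ (u - s) / mesh := Nat.floor_le hr0
    have hfl2 : (u - s) / mesh < i + 1 := Nat.lt_floor_add_one _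
    have hiN : i ≤ N := by
      have hb : (u - s) / mesh ≤ (N : ℝ) := by
        rw [div_le_iff₀ hmeshpos]
        have : mesh * N = M := by rw [hmeshdef]; field_simp
        rw [mul_comm (N:ℝ) mesh, this]
        linarith [hu.2]
      exact_mod_cast hfl1.trans hb
    refine ⟨i, hiN, ?_⟩
    have hl : mesh * i ≤ u - s := by
      have h4 := mul_le_mul_of_nonneg_left hfl1 hmeshpos.le
      rwa [mul_comm mesh ((u - s) / mesh), div_mul_cancel₀ _ hmeshpos.ne'] at h4
    have hr : u - s < (↑i + 1) * mesh := (div_lt_iff₀ hmeshpos).1 hfl2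
    have hr' : u - s < mesh * ↑i + mesh := by nlinarith [hr]
    have heq : u - net i = (u - s) - mesh * ↑i := by rw [hnet]; ring
    rw [heq, abs_of_nonneg (by linarith)]
    linarith
  have hEv1 : ∀ᶠ j in U, ∀ i ∈ Finset.range (N + 1), |ψ j (net i) - g (net i)| ≤ A := by
    rw [eventually_all_finset]
    intro i hi
    have hmem := hnetmem i (Nat.lt_succ_iff.1 (Finset.mem_range.1 hi))
    have htend := Metric.tendsto_nhds.1 (hlim (net i) hmem) A hApos
    filter_upwards [htend] with j hj
    rw [Real.dist_eq] at hj
    exact hj.le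
  filter_upwards [hEv1, hlip] with j hj hlipj
  have hbound : ∀ u ∈ Set.uIoc s t, ‖g u - ψ j u‖ ≤ 2 * C * mesh + A := by
    intro u hu
    rw [Set.uIoc_of_le hst.le] at hu
    have huIcc : u ∈ Icc s t := ⟨hu.1.le, hu.2⟩
    obtain ⟨i, hiN, hui⟩ := hnear u huIcc
    have hmemi := hnetmem i hiN
    have e1 : |g u - g (net i)| ≤ C * mesh := by
      have := lipschitzOnWith_iff_dist_le_mul.1 hglip u huIcc (net i) hmemi
      rw [Real.dist_eq, Real.dist_eq, hCcoe] at this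
      refine le_trans this (mul_le_mul_of_nonneg_left hui hC.le)
    have e2 : |g (net i) - ψ j (net i)| ≤ A := by
      rw [abs_sub_comm]; exact hj i (Finset.mem_range.2 (Nat.lt_succ_of_le hiN))
    have e3 : |ψ j (net i) - ψ j u| ≤ C * mesh := by
      have := lipschitzOnWith_iff_dist_le_mul.1 hlipj (net i) hmemi u huIcc
      rw [Real.dist_eq, Real.dist_eq, hCcoe] at this
      refine le_trans this (mul_le_mul_of_nonneg_left (by rwa [abs_sub_comm]) hC.le)
    calc ‖g u - ψ j u‖ = |g u - ψ j u| := rfl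
    _ = |(g u - g (net i)) + ((g (net i) - ψ j (net i)) + (ψ j (net i) - ψ j u))| := by
        ring_nf
    _ ≤ |g u - g (net i)| + |(g (net i) - ψ j (net i)) + (ψ j (net i) - ψ j u)| :=
        abs_add_le _ _
    _ ≤ |g u - g (net i)| + (|g (net i) - ψ j (net i)| + |ψ j (net i) - ψ j u|) := by
        gcongr
        exact abs_add_le _ _
    _ ≤ C * mesh + (A + C * mesh) := by gcongr
    _ = 2 * C * mesh + A := by ring
  have hgint : IntervalIntegrable g volume s t := by
    refine ContinuousOn.intervalIntegrable ?_
    rw [Set.uIcc_of_le hst.le]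
    exact hglip.continuousOn
  have hψint : IntervalIntegrable (ψ j) volume s t := by
    refine ContinuousOn.intervalIntegrable ?_
    rw [Set.uIcc_of_le hst.le]
    exact hlipj.continuousOn
  have hdiff : ∫ u in s..t, (g u - ψ j u) = (∫ u in s..t, g u) - ∫ u in s..t, ψ j u :=
    intervalIntegral.integral_sub hgint hψint
  have hnorm := intervalIntegral.norm_integral_le_of_norm_le_const hbound
  rw [hdiff] at hnorm
  have habs : |t - s| = M := abs_of_pos (by linarith)
  rw [habs] at hnorm
  have h1 : (∫ u in s..t, g u) - ∫ u in s..t, ψ j u ≤ (2 * C * mesh + A) * M :=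
    le_trans (le_abs_self _) hnorm
  have h2 : A * M ≤ ε / 2 := by
    rw [hAdef, div_mul_eq_mul_div, div_le_div_iff₀ (by nlinarith) (by norm_num : (0:ℝ) < 2)]
    nlinarith
  nlinarith [hmesh, h2, h1]

end G0

section H0
variable {n : ℕ} {D : Set (EuclideanSpace ℝ (Fin n))}

lemma lipschitzWith_clamp (T : ℝ) : LipschitzWith 1 (fun u : ℝ => max 0 (min u T)) := by
  refine LipschitzWith.of_dist_le_mul fun u v => ?_
  rw [NNReal.coe_one, one_mul, Real.dist_eq, Real.dist_eq]
  have hmin : |min u T - min v T| ≤ |u - v| := by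
    rcases le_total u T with h | h
    · rcases le_total v T with h' | h'
      · rw [min_eq_left h, min_eq_left h']
      · rw [min_eq_left h, min_eq_right h', abs_sub_le_iff]
        constructor <;> linarith [le_abs_self (u - v), neg_le_abs (u - v)]
    · rcases le_total v T with h' | h'
      · rw [min_eq_right h, min_eq_left h', abs_sub_le_iff]
        constructor <;> linarith [le_abs_self (u - v), neg_le_abs (u - v)]
      · rw [min_eq_right h, min_eq_right h']
        simp [abs_nonneg]
  have hmax : ∀ a b : ℝ, |max 0 a - max 0 b| ≤ |a - b| := by
    intro a b
    rcases le_total a 0 with h | h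
    · rcases le_total b 0 with h' | h'
      · rw [max_eq_left h, max_eq_left h']
        simp [abs_nonneg]
      · rw [max_eq_left h, max_eq_right h', abs_sub_le_iff]
        constructor <;> linarith [le_abs_self (a - b), neg_le_abs (a - b)]
    · rcases le_total b 0 with h' | h'
      · rw [max_eq_right h, max_eq_left h', abs_sub_le_iff]
        constructor <;> linarith [le_abs_self (a - b), neg_le_abs (a - b)]
      · rw [max_eq_right h, max_eq_right h']
  exact le_trans (hmax _ _) hmin

lemma lipschitzOnWith_inv_distBoundary (hD : IsOpen D) (hfr : (frontier D).Nonempty)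
    {f : ℝ → EuclideanSpace ℝ (Fin n)} {s t m : ℝ} (hm : 0 < m)
    (hf : LipschitzWith 1 f)
    (hlow : ∀ u ∈ Icc s t, m ≤ distBoundary D (f u)) :
    LipschitzOnWith (Real.toNNReal (1/(m*m)))
      (fun u => 1 / distBoundary D (f u)) (Icc s t) := by
  rw [lipschitzOnWith_iff_dist_le_mul]
  intro u hu v hv
  have hCcoe : ((Real.toNNReal (1/(m*m)) : ℝ≥0) : ℝ) = 1/(m*m) :=
    Real.coe_toNNReal _ (by positivity)
  rw [hCcoe, Real.dist_eq, Real.dist_eq]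
  set a := distBoundary D (f u) with ha
  set b := distBoundary D (f v) with hb
  have hau : m ≤ a := hlow u hu
  have hbv : m ≤ b := hlow v hv
  have hapos : 0 < a := lt_of_lt_of_le hm hau
  have hbpos : 0 < b := lt_of_lt_of_le hm hbv
  have hdiff : 1 / a - 1 / b = (b - a) / (a * b) := by
    field_simp
  rw [hdiff, abs_div, abs_of_pos (mul_pos hapos hbpos)]
  have hab : |b - a| ≤ |u - v| := by
    have h1 : dist a b ≤ dist (f u) (f v) := by
      have := lipschitzWith_distBoundary (n := n) (D := D)
      simpa using this.dist_le_mul (f u) (f v)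
    have h2 : dist (f u) (f v) ≤ dist u v := by simpa using hf.dist_le_mul u v
    have := le_trans h1 h2
    rw [Real.dist_eq, Real.dist_eq] at this
    rw [abs_sub_comm]
    exact this
  have hm2 : m * m ≤ a * b := by nlinarith
  calc |b - a| / (a * b) ≤ |u - v| / (m * m) := by
        apply div_le_div₀ (abs_nonneg _) hab (by positivity) hm2
  _ = 1 / (m * m) * |u - v| := by ring

end H0

end QH

set_option maxHeartbeats 4000000 in
theorem statement9 (n : ℕ) (α c : ℝ) (D : Set (EuclideanSpace ℝ (Fin n)))
    (x₀ : EuclideanSpace ℝ (Fin n)) (hD : IsHolderDomain D α c x₀) :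
    ∀ x ∈ frontier D, ∃ (L : ℝ) (γ : ℝ → EuclideanSpace ℝ (Fin n)),
      IsLandingQHGeodesic D x₀ x L γ := by
  classical
  intro x hx
  have hfr : (frontier D).Nonempty := ⟨x, hx⟩
  have hDo : IsOpen D := hD.isOpen
  have hx₀D : x₀ ∈ D := hD.basepoint_mem
  have hα : 0 < α := hD.alpha_pos
  have hcpos : 0 < c := hD.c_pos
  have hxD : x ∉ D := by
    intro hxD
    exact (hDo.frontier_eq ▸ hx).2 hxD
  have hxcl : x ∈ closure D := frontier_subset_closure hx
  obtain ⟨z, hzD, hz⟩ := mem_closure_iff_seq_limit.1 hxcl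
  set ε : ℕ → ℝ := fun j => 1 / ((j : ℝ) + 1) with hεdef
  have hεpos : ∀ j, 0 < ε j := fun j => by positivity
  have hεle1 : ∀ j, ε j ≤ 1 := fun j => by
    rw [hεdef]
    simp only []
    rw [div_le_one (by positivity)]
    simp
  have hκfin : ∀ j : ℕ, qhDist D (z j) x₀ ≠ ⊤ := fun j =>
    ne_top_of_le_ne_top ENNReal.ofReal_ne_top (hD.qh_bound (z j) (hzD j))
  have hcomp : ∀ j : ℕ, ∃ (L : ℝ) (γ : ℝ → EuclideanSpace ℝ (Fin n)), 0 ≤ L ∧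
      LipschitzOnWith 1 γ (Icc 0 L) ∧ γ 0 = z j ∧ γ L = x₀ ∧ γ '' Icc 0 L ⊆ D ∧
      ∫⁻ u in Icc 0 L, ENNReal.ofReal (1 / distBoundary D (γ u)) <
        qhDist D (z j) x₀ + ENNReal.ofReal (ε j) := by
    intro j
    refine QH.exists_competitor (ENNReal.lt_add_right (hκfin j) ?_)
    simp only [ne_eq, ENNReal.ofReal_eq_zero, not_le]
    exact hεpos j
  choose T₀ γ₀ hT₀ hlip₀ hγ00 hγ0T him₀ hint₀ using hcomp
  set σ : ℕ → ℝ → EuclideanSpace ℝ (Fin n) :=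
    fun j u => γ₀ j (max 0 (min u (T₀ j))) with hσdef
  have hclampmem : ∀ (j : ℕ) (u : ℝ), max 0 (min u (T₀ j)) ∈ Icc 0 (T₀ j) := fun j u =>
    ⟨le_max_left _ _, max_le (hT₀ j) (min_le_right _ _)⟩
  have hclampeq : ∀ (j : ℕ) (u : ℝ), u ∈ Icc 0 (T₀ j) → max 0 (min u (T₀ j)) = u :=
    fun j u hu => by rw [min_eq_left hu.2, max_eq_right hu.1]
  have hσlip : ∀ j, LipschitzWith 1 (σ j) := by
    intro j
    have h1 : LipschitzOnWith 1 (σ j) univ := by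
      have := (hlip₀ j).comp ((QH.lipschitzWith_clamp (T₀ j)).lipschitzOnWith (s := univ))
        (fun u _ => hclampmem j u)
      simpa [hσdef, Function.comp_def] using this
    rwa [lipschitzOnWith_univ] at h1
  have hσmem : ∀ j u, σ j u ∈ D := fun j u => him₀ j ⟨_, hclampmem j u, rfl⟩
  have hσeq : ∀ (j : ℕ) (u : ℝ), u ∈ Icc 0 (T₀ j) → σ j u = γ₀ j u := fun j u hu => by
    rw [hσdef]; simp only []; rw [hclampeq j u hu]
  have hσ0 : ∀ j, σ j 0 = z j := fun j => by
    rw [hσeq j 0 ⟨le_refl _, hT₀ j⟩, hγ00 j]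
  have hσT : ∀ j, σ j (T₀ j) = x₀ := fun j => by
    rw [hσeq j (T₀ j) ⟨hT₀ j, le_refl _⟩, hγ0T j]
  have hnear : ∀ j, ∫⁻ u in Icc 0 (T₀ j), ENNReal.ofReal (1 / distBoundary D (σ j u)) ≤
      qhDist D (σ j 0) x₀ + ENNReal.ofReal (ε j) := by
    intro j
    rw [hσ0 j]
    rw [MeasureTheory.setLIntegral_congr_fun measurableSet_Icc
      (fun u hu => by rw [hσeq j u hu])]
    exact (hint₀ j).le
  have hest := fun j => QH.near_min_estimates hD hfr (hT₀ j) (hεpos j) (hεle1 j)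
    (hσlip j) (hσmem j) (hσT j) (hnear j)
  set δ₀ := distBoundary D x₀ with hδ₀def
  have hδ₀pos : 0 < δ₀ := QH.distBoundary_pos hDo hfr hx₀D
  set K₁ := δ₀ * Real.exp (α * (c + 1)) with hK₁def
  have hK₁pos : 0 < K₁ := mul_pos hδ₀pos (Real.exp_pos _)
  set Λ := K₁ / α with hΛdef
  have hΛpos : 0 < Λ := div_pos hK₁pos hα
  set η : ℝ → ℝ := fun s => δ₀ * Real.exp (-(1/α) * Real.log (K₁ / (α * s))) with hηdef
  have hηpos : ∀ s, 0 < η s := fun s =>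
    mul_pos hδ₀pos (Real.exp_pos _)
  have hηmono : ∀ s₁ s₂ : ℝ, 0 < s₁ → s₁ ≤ s₂ → η s₁ ≤ η s₂ := by
    intro s₁ s₂ h1 h2
    rw [hηdef]
    simp only []
    refine mul_le_mul_of_nonneg_left (Real.exp_le_exp.2 ?_) hδ₀pos.le
    rw [neg_mul, neg_mul, neg_le_neg_iff]
    refine mul_le_mul_of_nonneg_left ?_ (by positivity)
    refine Real.log_le_log (div_pos hK₁pos (mul_pos hα (lt_of_lt_of_le h1 h2))) ?_
    refine div_le_div_of_nonneg_left hK₁pos.le (mul_pos hα h1) ?_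
    exact mul_le_mul_of_nonneg_left h2 hα.le
  have hηest : ∀ (j : ℕ) (s : ℝ), 0 < s → s ≤ T₀ j → η s ≤ distBoundary D (σ j s) :=
    fun j s h1 h2 => (hest j).2 s h1 h2
  have hTΛ : ∀ j, T₀ j ≤ Λ := fun j => (hest j).1
  set U : Ultrafilter ℕ := Ultrafilter.of atTop with hUdef
  have hUle : (U : Filter ℕ) ≤ atTop := Ultrafilter.of_le _
  obtain ⟨T, hTIcc, hTtend⟩ : ∃ T ∈ Icc (0:ℝ) Λ, Tendsto T₀ (U : Filter ℕ) (𝓝 T) := by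
    obtain ⟨T, hT1, hT2⟩ := isCompact_Icc.ultrafilter_le_nhds (U.map T₀) (by
      refine Filter.le_principal_iff.2 ?_
      rw [Ultrafilter.coe_map, Filter.mem_map]
      exact Filter.univ_mem' (fun j => ⟨hT₀ j, hTΛ j⟩))
    exact ⟨T, hT1, by rwa [Ultrafilter.coe_map] at hT2⟩
  set ψ : ℕ → ℝ → EuclideanSpace ℝ (Fin n) := fun j u => σ j (u + (T₀ j - T)) with hψdef
  have hψlip : ∀ j, LipschitzWith 1 (ψ j) := by
    intro j
    have h2 : LipschitzWith 1 (fun u : ℝ => u + (T₀ j - T)) :=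
      LipschitzWith.of_dist_le_mul (by
        intro a b; simp [Real.dist_eq, add_sub_add_right_eq_sub])
    have := (hσlip j).comp h2
    simpa [hψdef, Function.comp_def] using this
  have hσball : ∀ j u, σ j u ∈ closedBall x₀ Λ := by
    intro j u
    rw [mem_closedBall]
    have h3 := lipschitzOnWith_iff_dist_le_mul.1 (hlip₀ j)
      (max 0 (min u (T₀ j))) (hclampmem j u) (T₀ j) ⟨hT₀ j, le_refl _⟩
    have h6 := hclampmem j u
    calc dist (σ j u) x₀ = dist (γ₀ j (max 0 (min u (T₀ j)))) (γ₀ j (T₀ j)) := by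
          rw [hγ0T j]
    _ ≤ 1 * dist (max 0 (min u (T₀ j))) (T₀ j) := h3
    _ ≤ Λ := by
        rw [one_mul, Real.dist_eq, abs_of_nonpos (by linarith [h6.2])]
        linarith [h6.1, hTΛ j]
  have hψball : ∀ j u, ψ j u ∈ closedBall x₀ Λ := fun j u => hσball j _
  have hlimex : ∀ t : ℝ, ∃ y ∈ closedBall x₀ Λ,
      Tendsto (fun j => ψ j t) (U : Filter ℕ) (𝓝 y) := by
    intro t
    obtain ⟨y, hy1, hy2⟩ := (isCompact_closedBall x₀ Λ).ultrafilter_le_nhds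
      (U.map (fun j => ψ j t)) (by
        refine Filter.le_principal_iff.2 ?_
        rw [Ultrafilter.coe_map, Filter.mem_map]
        exact Filter.univ_mem' (fun j => hψball j t))
    exact ⟨y, hy1, by rwa [Ultrafilter.coe_map] at hy2⟩
  choose γ hγball hγtend using hlimex
  have hγlip : LipschitzWith 1 γ := by
    refine LipschitzWith.of_dist_le_mul fun u v => ?_
    rw [NNReal.coe_one, one_mul]
    have h1 : Tendsto (fun j => dist (ψ j u) (ψ j v)) (U : Filter ℕ)
        (𝓝 (dist (γ u) (γ v))) := (hγtend u).dist (hγtend v)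
    refine le_of_tendsto h1 (Filter.Eventually.of_forall fun j => ?_)
    have := (hψlip j).dist_le_mul u v
    simpa using this
  have hzU : Tendsto z (U : Filter ℕ) (𝓝 x) := hz.mono_left hUle
  have hψ0tend : Tendsto (fun j => ψ j 0) (U : Filter ℕ) (𝓝 x) := by
    rw [tendsto_iff_dist_tendsto_zero]
    have hb : ∀ j, dist (ψ j 0) x ≤ |T₀ j - T| + dist (z j) x := by
      intro j
      have h1 : dist (ψ j 0) (z j) ≤ |T₀ j - T| := by
        rw [← hσ0 j]
        have h2 := (hσlip j).dist_le_mul (0 + (T₀ j - T)) 0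
        calc dist (ψ j 0) (σ j 0) = dist (σ j (0 + (T₀ j - T))) (σ j 0) := rfl
        _ ≤ 1 * dist (0 + (T₀ j - T)) 0 := h2
        _ = |T₀ j - T| := by rw [one_mul, zero_add, Real.dist_eq, sub_zero]
      calc dist (ψ j 0) x ≤ dist (ψ j 0) (z j) + dist (z j) x := dist_triangle _ _ _
      _ ≤ |T₀ j - T| + dist (z j) x := add_le_add_left h1 _
    have hlim0 : Tendsto (fun j => |T₀ j - T| + dist (z j) x) (U : Filter ℕ) (𝓝 0) := by
      have l1 : Tendsto (fun j => |T₀ j - T|) (U : Filter ℕ) (𝓝 0) := by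
        have l0 := (hTtend.sub (tendsto_const_nhds (x := T))).abs
        simpa using l0
      have l2 : Tendsto (fun j => dist (z j) x) (U : Filter ℕ) (𝓝 0) :=
        tendsto_iff_dist_tendsto_zero.1 hzU
      simpa using l1.add l2
    exact squeeze_zero (fun j => dist_nonneg) hb hlim0
  have hγ0x : γ 0 = x := tendsto_nhds_unique (hγtend 0) hψ0tend
  have hγTx₀ : γ T = x₀ := by
    refine tendsto_nhds_unique (hγtend T) ?_
    have hconst : (fun j => ψ j T) = fun _ => x₀ := by
      funext j
      show σ j (T + (T₀ j - T)) = x₀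
      rw [show T + (T₀ j - T) = T₀ j by ring, hσT j]
    rw [hconst]
    exact tendsto_const_nhds
  have hxx₀ : 0 < dist x x₀ := dist_pos.2 (fun hEq => hxD (hEq ▸ hx₀D))
  have hTge : dist x x₀ ≤ T := by
    refine le_of_tendsto_of_tendsto (hzU.dist (tendsto_const_nhds (x := x₀))) hTtend
      (Filter.Eventually.of_forall fun j => ?_)
    have h1 := (hσlip j).dist_le_mul 0 (T₀ j)
    rw [hσ0 j, hσT j] at h1
    have h2 : dist (0:ℝ) (T₀ j) = T₀ j := by
      rw [Real.dist_eq, abs_of_nonpos (by linarith [hT₀ j])]; ring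
    rw [h2] at h1
    simpa using h1
  have hTpos : 0 < T := lt_of_lt_of_le hxx₀ hTge
  -- lower bound on distBoundary along the limit curve
  have hγlow : ∀ t : ℝ, 0 < t → t ≤ T → η (t/2) ≤ distBoundary D (γ t) := by
    intro t ht htT
    have hcont : Tendsto (fun j => distBoundary D (ψ j t)) (U : Filter ℕ)
        (𝓝 (distBoundary D (γ t))) :=
      (QH.continuous_distBoundary.tendsto _).comp (hγtend t)
    refine ge_of_tendsto hcont ?_
    have hevT : ∀ᶠ j in (U : Filter ℕ), |T₀ j - T| < t/2 := by
      have := Metric.tendsto_nhds.1 hTtend (t/2) (by linarith)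
      filter_upwards [this] with j hj
      rwa [Real.dist_eq] at hj
    filter_upwards [hevT] with j hj
    have habs := abs_lt.1 hj
    have harg1 : 0 < t + (T₀ j - T) := by linarith [habs.1]
    have harg2 : t + (T₀ j - T) ≤ T₀ j := by linarith
    have h5 := hηest j (t + (T₀ j - T)) harg1 harg2
    exact le_trans (hηmono (t/2) (t + (T₀ j - T)) (by linarith) (by linarith [habs.1])) h5
  have hγD : ∀ t : ℝ, 0 < t → t ≤ T → γ t ∈ D := by
    intro t ht htT
    have hcl : γ t ∈ closure D :=
      isClosed_closure.mem_of_tendsto (hγtend t)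
        (Filter.Eventually.of_forall fun j => subset_closure (hσmem j _))
    by_contra hnotD
    have hfr' : γ t ∈ frontier D := ⟨hcl, by rwa [hDo.interior_eq]⟩
    have h0 := QH.distBoundary_frontier hfr'
    have h1 := hγlow t ht htT
    have h2 := hηpos (t/2)
    rw [h0] at h1
    linarith
  -- the geodesic property
  have hgeo : ∀ s ∈ Ioc 0 T, ∀ t ∈ Ioc 0 T, s ≤ t →
      qhDist D (γ s) (γ t) = ∫⁻ u in Icc s t, ENNReal.ofReal (1 / distBoundary D (γ u)) := by
    rintro s ⟨hs0, hsT⟩ t ⟨ht0, htT⟩ hst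
    rcases eq_or_lt_of_le hst with rfl | hslt
    · rw [QH.qhDist_self (hγD s hs0 hsT)]
      have hvol : volume (Icc s s) = 0 := by simp
      rw [setLIntegral_measure_zero _ _ hvol]
    · -- the case s < t
      set m := η (s/2) with hmdef
      have hmpos : 0 < m := hηpos _
      have hγlowst : ∀ u : ℝ, s ≤ u → u ≤ t → m ≤ distBoundary D (γ u) := by
        intro u h1 h2
        exact le_trans (hηmono (s/2) (u/2) (by linarith) (by linarith))
          (hγlow u (by linarith) (by linarith))
      have hγmemst : ∀ u : ℝ, s ≤ u → u ≤ t → γ u ∈ D := fun u h1 h2 =>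
        hγD u (by linarith) (by linarith)
      have hδγcont : ContinuousOn (fun u => 1 / distBoundary D (γ u)) (Icc s t) := by
        refine ContinuousOn.div continuousOn_const
          ((QH.continuous_distBoundary.comp hγlip.continuous).continuousOn) ?_
        intro u hu
        exact ne_of_gt (lt_of_lt_of_le hmpos (hγlowst u hu.1 hu.2))
      have hδγnn : ∀ u ∈ Icc s t, 0 ≤ 1 / distBoundary D (γ u) := by
        intro u hu
        have h1 := lt_of_lt_of_le hmpos (hγlowst u hu.1 hu.2)
        positivity
      have hIs : ∫⁻ u in Icc s t, ENNReal.ofReal (1 / distBoundary D (γ u)) =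
          ENNReal.ofReal (∫ u in s..t, 1 / distBoundary D (γ u)) :=
        QH.lintegral_Icc_ofReal hst hδγcont hδγnn
      have hupper : qhDist D (γ s) (γ t) ≤
          ∫⁻ u in Icc s t, ENNReal.ofReal (1 / distBoundary D (γ u)) :=
        QH.qhDist_le_subarc hst hγlip.lipschitzOnWith
          (by rintro _ ⟨u, hu, rfl⟩; exact hγmemst u hu.1 hu.2)
      refine le_antisymm hupper ?_
      rw [hIs]
      refine ENNReal.le_of_forall_pos_le_add fun ε' hε' _ => ?_
      set e := (ε' : ℝ) / 4 with hedef
      have hepos : 0 < e := by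
        rw [hedef]
        have h1 : (0:ℝ) < (ε' : ℝ) := by exact_mod_cast hε'
        positivity
      set d₁ := m * (1 - Real.exp (-e)) with hd₁def
      have hexpe : Real.exp (-e) < 1 := by
        calc Real.exp (-e) < Real.exp 0 := Real.exp_lt_exp.2 (by linarith)
        _ = 1 := Real.exp_zero
      have hd₁pos : 0 < d₁ := mul_pos hmpos (by linarith)
      have hd₁m : d₁ ≤ m := by
        rw [hd₁def]
        nlinarith [Real.exp_pos (-e)]
      -- the events
      have hEvA : ∀ᶠ j in (U : Filter ℕ), |T₀ j - T| < s/2 := by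
        have h1 := Metric.tendsto_nhds.1 hTtend (s/2) (by linarith)
        filter_upwards [h1] with j hj
        rwa [Real.dist_eq] at hj
      have hEvB : ∀ᶠ j in (U : Filter ℕ), dist (ψ j s) (γ s) < d₁ :=
        Metric.tendsto_nhds.1 (hγtend s) d₁ hd₁pos
      have hEvC : ∀ᶠ j in (U : Filter ℕ), dist (ψ j t) (γ t) < d₁ :=
        Metric.tendsto_nhds.1 (hγtend t) d₁ hd₁pos
      have hEvD : ∀ᶠ j in (U : Filter ℕ), ε j ≤ e := by
        refine Filter.Eventually.filter_mono hUle ?_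
        have h1 : Tendsto ε atTop (𝓝 0) := tendsto_one_div_add_atTop_nhds_zero_nat
        have h2 := Metric.tendsto_nhds.1 h1 e hepos
        filter_upwards [h2] with j hj
        rw [Real.dist_eq, sub_zero, abs_of_pos (hεpos j)] at hj
        exact hj.le
      have hEvψlow : ∀ᶠ j in (U : Filter ℕ), ∀ u ∈ Icc s t, m ≤ distBoundary D (ψ j u) := by
        filter_upwards [hEvA] with j hj u hu
        have habs := abs_lt.1 hj
        have harg1 : 0 < u + (T₀ j - T) := by linarith [hu.1, habs.1]
        have harg2 : u + (T₀ j - T) ≤ T₀ j := by linarith [hu.2, htT]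
        refine le_trans (hηmono (s/2) (u + (T₀ j - T)) (by linarith) ?_)
          (hηest j _ harg1 harg2)
        linarith [hu.1, habs.1]
      have hEvE : ∀ᶠ j in (U : Filter ℕ),
          (∫ u in s..t, 1 / distBoundary D (γ u)) ≤
            (∫ u in s..t, 1 / distBoundary D (ψ j u)) + e := by
        refine QH.eventually_integral_le hslt (one_div_pos.2 (mul_pos hmpos hmpos))
          ?_ ?_ ?_ hepos
        · filter_upwards [hEvψlow] with j hj
          exact QH.lipschitzOnWith_inv_distBoundary hDo hfr hmpos (hψlip j) hj
        · exact QH.lipschitzOnWith_inv_distBoundary hDo hfr hmpos hγlip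
            (fun u hu => hγlowst u hu.1 hu.2)
        · intro u hu
          have h1 : Tendsto (fun j => distBoundary D (ψ j u)) (U : Filter ℕ)
              (𝓝 (distBoundary D (γ u))) :=
            (QH.continuous_distBoundary.tendsto _).comp (hγtend u)
          exact tendsto_const_nhds.div h1
            (ne_of_gt (lt_of_lt_of_le hmpos (hγlowst u hu.1 hu.2)))
      obtain ⟨j, ⟨⟨⟨⟨hjA, hjB⟩, hjC⟩, hjD⟩, hjψlow⟩, hjE⟩ :=
        ((((hEvA.and hEvB).and hEvC).and hEvD).and hEvψlow).and hEvE |>.exists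
      have hψapp : ∀ (u : ℝ), ψ j u = σ j (u + (T₀ j - T)) := fun _ => rfl
      have habsj := abs_lt.1 hjA
      have ha0 : 0 < s + (T₀ j - T) := by linarith [habsj.1]
      have hab : s + (T₀ j - T) ≤ t + (T₀ j - T) := by linarith
      have hbT : t + (T₀ j - T) ≤ T₀ j := by linarith [htT]
      -- lower bound for distBoundary along σ j between the shifted endpoints
      have hσj_low : ∀ u : ℝ, s + (T₀ j - T) ≤ u → u ≤ t + (T₀ j - T) →
          m ≤ distBoundary D (σ j u) := by
        intro u h1 h2
        have h3 := hjψlow (u - (T₀ j - T)) ⟨by linarith, by linarith⟩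
        rw [hψapp, sub_add_cancel] at h3
        exact h3
      -- continuity facts for 1/δ∘(σ j)
      have hδσpos : ∀ u, 0 < distBoundary D (σ j u) := fun u =>
        QH.distBoundary_pos hDo hfr (hσmem j u)
      have hδσcont : Continuous (fun u => 1 / distBoundary D (σ j u)) := by
        refine continuous_const.div
          (QH.continuous_distBoundary.comp (hσlip j).continuous) ?_
        exact fun u => ne_of_gt (hδσpos u)
      have hδσnn : ∀ u, 0 ≤ 1 / distBoundary D (σ j u) := fun u =>
        le_of_lt (by have := hδσpos u; positivity)
      have hδσint : ∀ a' b' : ℝ, IntervalIntegrable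
          (fun u => 1 / distBoundary D (σ j u)) volume a' b' :=
        fun a' b' => hδσcont.intervalIntegrable _ _
      -- the three pieces
      have hIccgen : ∀ a' b' : ℝ, a' ≤ b' →
          ∫⁻ u in Icc a' b', ENNReal.ofReal (1 / distBoundary D (σ j u)) =
            ENNReal.ofReal (∫ u in a'..b', 1 / distBoundary D (σ j u)) :=
        fun a' b' h => QH.lintegral_Icc_ofReal h hδσcont.continuousOn (fun u _ => hδσnn u)
      have hPnn : 0 ≤ ∫ u in (0:ℝ)..(s + (T₀ j - T)), 1 / distBoundary D (σ j u) :=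
        intervalIntegral.integral_nonneg ha0.le (fun u _ => hδσnn u)
      have hQnn : 0 ≤ ∫ u in (s + (T₀ j - T))..(t + (T₀ j - T)),
          1 / distBoundary D (σ j u) :=
        intervalIntegral.integral_nonneg hab (fun u _ => hδσnn u)
      have hRnn : 0 ≤ ∫ u in (t + (T₀ j - T))..(T₀ j), 1 / distBoundary D (σ j u) :=
        intervalIntegral.integral_nonneg hbT (fun u _ => hδσnn u)
      have hPQR : (∫ u in (0:ℝ)..(s + (T₀ j - T)), 1 / distBoundary D (σ j u)) +
          (∫ u in (s + (T₀ j - T))..(t + (T₀ j - T)), 1 / distBoundary D (σ j u)) +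
          (∫ u in (t + (T₀ j - T))..(T₀ j), 1 / distBoundary D (σ j u)) =
          ∫ u in (0:ℝ)..(T₀ j), 1 / distBoundary D (σ j u) := by
        rw [intervalIntegral.integral_add_adjacent_intervals (hδσint _ _) (hδσint _ _),
          intervalIntegral.integral_add_adjacent_intervals (hδσint _ _) (hδσint _ _)]
      -- subarc bounds for σ j
      have hsubgen : ∀ a' b' : ℝ, a' ≤ b' → qhDist D (σ j a') (σ j b') ≤
          ENNReal.ofReal (∫ u in a'..b', 1 / distBoundary D (σ j u)) := by
        intro a' b' h
        rw [← hIccgen a' b' h]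
        exact QH.qhDist_le_subarc h (hσlip j).lipschitzOnWith
          (by rintro _ ⟨u, _, rfl⟩; exact hσmem j u)
      -- splice estimate
      have hsplice : ENNReal.ofReal (∫ u in (s + (T₀ j - T))..(t + (T₀ j - T)),
          1 / distBoundary D (σ j u)) ≤
          qhDist D (σ j (s + (T₀ j - T))) (σ j (t + (T₀ j - T))) + ENNReal.ofReal (ε j) := by
        have hqfin : qhDist D (σ j (s + (T₀ j - T))) (σ j (t + (T₀ j - T))) ≠ ⊤ :=
          ne_top_of_le_ne_top ENNReal.ofReal_ne_top (hsubgen _ _ hab)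
        have hκjfin : qhDist D (σ j 0) x₀ ≠ ⊤ := by
          rw [hσ0 j]; exact hκfin j
        have hknear := hnear j
        rw [hIccgen 0 (T₀ j) (hT₀ j), ← hPQR] at hknear
        have htri : qhDist D (σ j 0) x₀ ≤
            ENNReal.ofReal (∫ u in (0:ℝ)..(s + (T₀ j - T)), 1 / distBoundary D (σ j u)) +
            qhDist D (σ j (s + (T₀ j - T))) (σ j (t + (T₀ j - T))) +
            ENNReal.ofReal (∫ u in (t + (T₀ j - T))..(T₀ j),
              1 / distBoundary D (σ j u)) := by
          calc qhDist D (σ j 0) x₀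
              ≤ qhDist D (σ j 0) (σ j (s + (T₀ j - T))) +
                qhDist D (σ j (s + (T₀ j - T))) x₀ := QH.qhDist_triangle _ _ _
          _ ≤ qhDist D (σ j 0) (σ j (s + (T₀ j - T))) +
              (qhDist D (σ j (s + (T₀ j - T))) (σ j (t + (T₀ j - T))) +
                qhDist D (σ j (t + (T₀ j - T))) x₀) :=
              add_le_add_right (QH.qhDist_triangle _ _ _) _
          _ ≤ ENNReal.ofReal (∫ u in (0:ℝ)..(s + (T₀ j - T)),
                1 / distBoundary D (σ j u)) +
              (qhDist D (σ j (s + (T₀ j - T))) (σ j (t + (T₀ j - T))) +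
                ENNReal.ofReal (∫ u in (t + (T₀ j - T))..(T₀ j),
                  1 / distBoundary D (σ j u))) := by
              refine add_le_add (hsubgen 0 _ ha0.le) (add_le_add_right ?_ _)
              have h9 := hsubgen (t + (T₀ j - T)) (T₀ j) hbT
              rwa [hσT j] at h9
          _ = _ := by rw [add_assoc]
        -- pass to real numbers
        have hRfin1 : ENNReal.ofReal (∫ u in (0:ℝ)..(s + (T₀ j - T)),
            1 / distBoundary D (σ j u)) +
            qhDist D (σ j (s + (T₀ j - T))) (σ j (t + (T₀ j - T))) +
            ENNReal.ofReal (∫ u in (t + (T₀ j - T))..(T₀ j),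
              1 / distBoundary D (σ j u)) ≠ ⊤ := by
          refine ENNReal.add_ne_top.2 ⟨ENNReal.add_ne_top.2
            ⟨ENNReal.ofReal_ne_top, hqfin⟩, ENNReal.ofReal_ne_top⟩
        have h1 := ENNReal.toReal_mono (ENNReal.add_ne_top.2
          ⟨hκjfin, ENNReal.ofReal_ne_top⟩) hknear
        have h2 := ENNReal.toReal_mono hRfin1 htri
        rw [ENNReal.toReal_ofReal (add_nonneg (add_nonneg hPnn hQnn) hRnn)] at h1
        rw [ENNReal.toReal_add hκjfin ENNReal.ofReal_ne_top,
          ENNReal.toReal_ofReal (hεpos j).le] at h1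
        rw [ENNReal.toReal_add (ENNReal.add_ne_top.2 ⟨ENNReal.ofReal_ne_top, hqfin⟩)
            ENNReal.ofReal_ne_top,
          ENNReal.toReal_add ENNReal.ofReal_ne_top hqfin,
          ENNReal.toReal_ofReal hPnn, ENNReal.toReal_ofReal hRnn] at h2
        have h3 : (∫ u in (s + (T₀ j - T))..(t + (T₀ j - T)),
            1 / distBoundary D (σ j u)) ≤
            (qhDist D (σ j (s + (T₀ j - T))) (σ j (t + (T₀ j - T)))).toReal + ε j := by
          linarith
        calc ENNReal.ofReal (∫ u in (s + (T₀ j - T))..(t + (T₀ j - T)),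
              1 / distBoundary D (σ j u))
            ≤ ENNReal.ofReal ((qhDist D (σ j (s + (T₀ j - T)))
                (σ j (t + (T₀ j - T)))).toReal + ε j) := ENNReal.ofReal_le_ofReal h3
        _ = ENNReal.ofReal ((qhDist D (σ j (s + (T₀ j - T)))
              (σ j (t + (T₀ j - T)))).toReal) + ENNReal.ofReal (ε j) :=
            ENNReal.ofReal_add ENNReal.toReal_nonneg (hεpos j).le
        _ = _ := by rw [ENNReal.ofReal_toReal hqfin]
      -- connection bounds
      have hconn : ∀ p q' : EuclideanSpace ℝ (Fin n), p ∈ D → m ≤ distBoundary D p →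
          dist p q' < d₁ → qhDist D p q' ≤ ENNReal.ofReal e := by
        intro p q' hpD hpm hdist
        have hδp : 0 < distBoundary D p := lt_of_lt_of_le hmpos hpm
        have hdlt : dist p q' < distBoundary D p :=
          lt_of_lt_of_le hdist (le_trans hd₁m hpm)
        refine le_trans (QH.qhDist_segment hDo hfr hpD hdlt) (ENNReal.ofReal_le_ofReal ?_)
        have h5 : distBoundary D p * Real.exp (-e) ≤ distBoundary D p - dist p q' := by
          have h6 : dist p q' ≤ distBoundary D p * (1 - Real.exp (-e)) :=
            le_trans hdist.le (by
              rw [hd₁def]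
              nlinarith [hpm, hexpe])
          nlinarith
        have hee : Real.exp e * Real.exp (-e) = 1 := by
          rw [← Real.exp_add]; simp
        have h6 : distBoundary D p / (distBoundary D p - dist p q') ≤ Real.exp e := by
          rw [div_le_iff₀ (by linarith : 0 < distBoundary D p - dist p q')]
          nlinarith [Real.exp_pos e, h5]
        calc Real.log (distBoundary D p / (distBoundary D p - dist p q'))
            ≤ Real.log (Real.exp e) :=
              Real.log_le_log (div_pos hδp (by linarith)) h6
        _ = e := Real.log_exp e
      have hconn1 : qhDist D (σ j (s + (T₀ j - T))) (γ s) ≤ ENNReal.ofReal e := by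
        refine hconn _ _ (hσmem j _) (hσj_low _ le_rfl hab) ?_
        rw [← hψapp s]
        exact hjB
      have hconn2 : qhDist D (γ t) (σ j (t + (T₀ j - T))) ≤ ENNReal.ofReal e := by
        refine hconn _ _ (hγmemst t hst le_rfl) (hγlowst t hst le_rfl) ?_
        rw [← hψapp t, dist_comm]
        exact hjC
      have hQtri : qhDist D (σ j (s + (T₀ j - T))) (σ j (t + (T₀ j - T))) ≤
          ENNReal.ofReal e + qhDist D (γ s) (γ t) + ENNReal.ofReal e := by
        calc qhDist D (σ j (s + (T₀ j - T))) (σ j (t + (T₀ j - T)))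
            ≤ qhDist D (σ j (s + (T₀ j - T))) (γ s) +
              qhDist D (γ s) (σ j (t + (T₀ j - T))) := QH.qhDist_triangle _ _ _
        _ ≤ qhDist D (σ j (s + (T₀ j - T))) (γ s) +
            (qhDist D (γ s) (γ t) + qhDist D (γ t) (σ j (t + (T₀ j - T)))) :=
            add_le_add_right (QH.qhDist_triangle _ _ _) _
        _ ≤ ENNReal.ofReal e + (qhDist D (γ s) (γ t) + ENNReal.ofReal e) :=
            add_le_add hconn1 (add_le_add_right hconn2 _)
        _ = _ := by rw [add_assoc]
      -- the final chain
      have hcv : (∫ u in s..t, 1 / distBoundary D (ψ j u)) =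
          ∫ u in (s + (T₀ j - T))..(t + (T₀ j - T)), 1 / distBoundary D (σ j u) := by
        have h7 := intervalIntegral.integral_comp_add_right (a := s) (b := t)
          (fun u => 1 / distBoundary D (σ j u)) (T₀ j - T)
        rw [← h7]
      have hψnn : 0 ≤ ∫ u in s..t, 1 / distBoundary D (ψ j u) := by
        rw [hcv]; exact hQnn
      calc ENNReal.ofReal (∫ u in s..t, 1 / distBoundary D (γ u))
          ≤ ENNReal.ofReal ((∫ u in s..t, 1 / distBoundary D (ψ j u)) + e) :=
            ENNReal.ofReal_le_ofReal hjE
      _ = ENNReal.ofReal (∫ u in s..t, 1 / distBoundary D (ψ j u)) +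
          ENNReal.ofReal e := ENNReal.ofReal_add hψnn hepos.le
      _ = ENNReal.ofReal (∫ u in (s + (T₀ j - T))..(t + (T₀ j - T)),
            1 / distBoundary D (σ j u)) + ENNReal.ofReal e := by rw [hcv]
      _ ≤ (qhDist D (σ j (s + (T₀ j - T))) (σ j (t + (T₀ j - T))) +
            ENNReal.ofReal (ε j)) + ENNReal.ofReal e :=
          add_le_add_left hsplice _
      _ ≤ ((ENNReal.ofReal e + qhDist D (γ s) (γ t) + ENNReal.ofReal e) +
            ENNReal.ofReal e) + ENNReal.ofReal e := by
          refine add_le_add (add_le_add hQtri (ENNReal.ofReal_le_ofReal hjD)) le_rfl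
      _ = qhDist D (γ s) (γ t) +
          (ENNReal.ofReal e + ENNReal.ofReal e + ENNReal.ofReal e + ENNReal.ofReal e) := by
          abel
      _ ≤ qhDist D (γ s) (γ t) + ↑ε' := by
          refine add_le_add_right (le_of_eq ?_) _
          rw [← ENNReal.ofReal_add hepos.le hepos.le,
            ← ENNReal.ofReal_add (by linarith) hepos.le,
            ← ENNReal.ofReal_add (by linarith) hepos.le]
          rw [show e + e + e + e = (ε' : ℝ) by rw [hedef]; ring]
          exact ENNReal.ofReal_coe_nnreal
  exact ⟨T, γ, hTpos, hγ0x, hγTx₀, hγlip.lipschitzOnWith,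
    (by rintro _ ⟨u, hu, rfl⟩; exact hγD u hu.1 hu.2), hgeo⟩
end

section
/- Let f : (0,1) → ℝ be continuous and let A ⊆ (0,1) be compact. Assume that f is absolutely continuous on every compact subinterval of every connected component of (0,1) ∖ A, that f is differentiable almost everywhere on (0,1) ∖ A with ∫_{(0,1)∖A} |f'| < ∞, and that the image f(A) has 1-dimensional Lebesgue measure zero. Then f is absolutely continuous on every compact subinterval of (0,1). -/
open MeasureTheory Metric Set Filter
open scoped ENNReal NNReal Topology

/-- `f` is absolutely continuous on the compact interval `[a, b]`: for every `ε > 0` there is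
`δ > 0` such that for every finite collection of pairwise disjoint open subintervals
`(s i, t i)` of `[a, b]` of total length less than `δ`, `∑ i, |f (t i) - f (s i)| < ε`. -/
def AbsolutelyContinuousOnIcc (f : ℝ → ℝ) (a b : ℝ) : Prop :=
  ∀ ε > (0 : ℝ), ∃ δ > (0 : ℝ), ∀ (m : ℕ) (s t : Fin m → ℝ),
    (∀ i, a ≤ s i ∧ s i < t i ∧ t i ≤ b) →
    (Pairwise fun i j => Disjoint (Ioo (s i) (t i)) (Ioo (s j) (t j))) →
    ∑ i, (t i - s i) < δ → ∑ i, |f (t i) - f (s i)| < ε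

lemma lusinN (f : ℝ → ℝ) {c d : ℝ} (hfc : ContinuousOn f (Icc c d))
    (hAC : AbsolutelyContinuousOnIcc f c d) {N : Set ℝ} (hN : N ⊆ Ioo c d)
    (hN0 : volume N = 0) : volume (f '' N) = 0 := by
  have main : ∀ ε : ℝ, 0 < ε → volume (f '' N) ≤ ENNReal.ofReal ε := by
    intro ε hε
    obtain ⟨δ, hδ, hACδ⟩ := hAC ε hε
    obtain ⟨U, hNU, hUopen, hUvol⟩ := Set.exists_isOpen_lt_of_lt N (ENNReal.ofReal δ)
      (by rw [hN0]; exact ENNReal.ofReal_pos.2 hδ)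
    set V := U ∩ Ioo c d with hVdef
    have hVopen : IsOpen V := hUopen.inter isOpen_Ioo
    have hNV : N ⊆ V := subset_inter hNU hN
    have hVvol : volume V < ENNReal.ofReal δ :=
      lt_of_le_of_lt (measure_mono inter_subset_left) hUvol
    have hVsub : V ⊆ Ioo c d := inter_subset_right
    set 𝒞 : Set (Set ℝ) := connectedComponentIn V '' V with h𝒞def
    have hcount : 𝒞.Countable := by
      have hsub : 𝒞 ⊆ connectedComponentIn V '' (V ∩ Set.range ((↑) : ℚ → ℝ)) := by
        rintro _ ⟨x, hx, rfl⟩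
        have hopen : IsOpen (connectedComponentIn V x) := hVopen.connectedComponentIn
        have hne : (connectedComponentIn V x).Nonempty := ⟨x, mem_connectedComponentIn hx⟩
        obtain ⟨q, hq⟩ := Rat.denseRange_cast (𝕜 := ℝ) |>.exists_mem_open hopen hne
        exact ⟨(q : ℝ), ⟨connectedComponentIn_subset V x hq, ⟨q, rfl⟩⟩,
          (connectedComponentIn_eq hq).symm⟩
      exact ((Set.countable_range _).mono inter_subset_right).image _ |>.mono hsub
    have h𝒞V : ∀ C : Set ℝ, C ∈ 𝒞 → C ⊆ V := by
      rintro _ ⟨x, hx, rfl⟩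
      exact connectedComponentIn_subset V x
    have hdisj𝒞 : ∀ C₁ C₂ : Set ℝ, C₁ ∈ 𝒞 → C₂ ∈ 𝒞 → C₁ ≠ C₂ → Disjoint C₁ C₂ := by
      rintro _ _ ⟨x₁, hx₁, rfl⟩ ⟨x₂, hx₂, rfl⟩ hne
      rw [Set.disjoint_left]
      intro z hz₁ hz₂
      exact hne ((connectedComponentIn_eq hz₁).trans (connectedComponentIn_eq hz₂).symm)
    have hprop : ∀ C : Set ℝ, C ∈ 𝒞 → ∃ u v : ℝ, u ≤ v ∧ c ≤ u ∧ v ≤ d ∧ Ioo u v ⊆ C ∧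
        volume (f '' C) ≤ ENNReal.ofReal |f v - f u| := by
      rintro _ ⟨x₀, hx₀, rfl⟩
      have hCV : connectedComponentIn V x₀ ⊆ V := connectedComponentIn_subset V x₀
      have hCcd : connectedComponentIn V x₀ ⊆ Ioo c d := hCV.trans hVsub
      have hx₀C : x₀ ∈ connectedComponentIn V x₀ := mem_connectedComponentIn hx₀
      have hne : (connectedComponentIn V x₀).Nonempty := ⟨x₀, hx₀C⟩
      have hbddb : BddBelow (connectedComponentIn V x₀) :=
        ⟨c, fun z hz => (hCcd hz).1.le⟩
      have hbdda : BddAbove (connectedComponentIn V x₀) :=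
        ⟨d, fun z hz => (hCcd hz).2.le⟩
      set a := sInf (connectedComponentIn V x₀) with hadef
      set b := sSup (connectedComponentIn V x₀) with hbdef
      have hca : c ≤ a := le_csInf hne fun z hz => (hCcd hz).1.le
      have hbd : b ≤ d := csSup_le hne fun z hz => (hCcd hz).2.le
      have hCab : connectedComponentIn V x₀ ⊆ Icc a b := fun z hz =>
        ⟨csInf_le hbddb hz, le_csSup hbdda hz⟩
      have hIooab : Ioo a b ⊆ connectedComponentIn V x₀ := by
        intro z hz
        obtain ⟨p, hp, hpz⟩ := exists_lt_of_csInf_lt hne hz.1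
        obtain ⟨q, hq, hzq⟩ := exists_lt_of_lt_csSup hne hz.2
        exact (isPreconnected_connectedComponentIn.ordConnected).out hp hq ⟨hpz.le, hzq.le⟩
      have hcont : ContinuousOn f (Icc a b) := hfc.mono (Icc_subset_Icc hca hbd)
      have hKne : (Icc a b).Nonempty := ⟨x₀, hCab hx₀C⟩
      obtain ⟨x, hxK, hxmin⟩ := isCompact_Icc.exists_isMinOn hKne hcont
      obtain ⟨y, hyK, hymax⟩ := isCompact_Icc.exists_isMaxOn hKne hcont
      refine ⟨min x y, max x y, min_le_max, le_trans hca (le_min hxK.1 hyK.1),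
        le_trans (max_le hxK.2 hyK.2) hbd, ?_, ?_⟩
      · intro z hz
        exact hIooab ⟨lt_of_le_of_lt (le_min hxK.1 hyK.1) hz.1,
          lt_of_lt_of_le hz.2 (max_le hxK.2 hyK.2)⟩
      · have himg : f '' connectedComponentIn V x₀ ⊆ Icc (f x) (f y) := by
          rintro _ ⟨z, hz, rfl⟩
          exact ⟨hxmin (hCab hz), hymax (hCab hz)⟩
        have hxy : f x ≤ f y := hxmin hyK
        calc volume (f '' connectedComponentIn V x₀) ≤ volume (Icc (f x) (f y)) :=
              measure_mono himg
          _ = ENNReal.ofReal (f y - f x) := Real.volume_Icc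
          _ = ENNReal.ofReal |f (max x y) - f (min x y)| := by
              rcases le_total x y with h | h
              · rw [max_eq_right h, min_eq_left h, abs_of_nonneg (by linarith)]
              · rw [max_eq_left h, min_eq_right h, abs_sub_comm, abs_of_nonneg (by linarith)]
    classical
    choose! u v huv hcu hvd hIoo hvol using hprop
    have hcover : f '' N ⊆ ⋃ C ∈ 𝒞, f '' C := by
      rintro _ ⟨z, hzN, rfl⟩
      exact mem_biUnion ⟨z, hNV hzN, rfl⟩ ⟨z, mem_connectedComponentIn (hNV hzN), rfl⟩
    calc volume (f '' N) ≤ volume (⋃ C ∈ 𝒞, f '' C) := measure_mono hcover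
      _ ≤ ∑' C : ↥𝒞, volume (f '' (C : Set ℝ)) := measure_biUnion_le volume hcount _
      _ ≤ ENNReal.ofReal ε := by
          refine Summable.tsum_le_of_sum_le ENNReal.summable ?_
          intro S
          calc ∑ C ∈ S, volume (f '' (C : Set ℝ))
              ≤ ∑ C ∈ S, ENNReal.ofReal |f (v C) - f (u C)| :=
                Finset.sum_le_sum fun C _ => hvol C C.2
            _ ≤ ENNReal.ofReal ε := by
                set S' := S.filter (fun C : ↥𝒞 => u (C : Set ℝ) < v (C : Set ℝ)) with hS'def
                have hsum_eq : ∑ C ∈ S, ENNReal.ofReal |f (v (C : Set ℝ)) - f (u (C : Set ℝ))|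
                    = ∑ C ∈ S', ENNReal.ofReal |f (v (C : Set ℝ)) - f (u (C : Set ℝ))| := by
                  refine (Finset.sum_filter_of_ne ?_).symm
                  intro C hC hne0
                  rcases lt_or_eq_of_le (huv C C.2) with h | h
                  · exact h
                  · exact absurd (by rw [h]; simp) hne0
                rw [hsum_eq]
                set n := Fintype.card {C // C ∈ S'} with hndef
                set e : Fin n ≃ {C // C ∈ S'} := (Fintype.equivFin {C // C ∈ S'}).symm with hedef
                set sf : Fin n → ℝ := fun i => u ((e i : ↥𝒞) : Set ℝ) with hsfdef
                set tf : Fin n → ℝ := fun i => v ((e i : ↥𝒞) : Set ℝ) with htfdef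
                have hcond : ∀ i, c ≤ sf i ∧ sf i < tf i ∧ tf i ≤ d := fun i =>
                  ⟨hcu _ (e i : ↥𝒞).2, (Finset.mem_filter.1 (e i).2).2, hvd _ (e i : ↥𝒞).2⟩
                have hpair : Pairwise fun i j => Disjoint (Ioo (sf i) (tf i)) (Ioo (sf j) (tf j)) := by
                  intro i j hij
                  have hne : ((e i : ↥𝒞) : Set ℝ) ≠ ((e j : ↥𝒞) : Set ℝ) := by
                    intro h
                    exact hij (e.injective (Subtype.ext (Subtype.ext h)) ▸ rfl)
                  exact (hdisj𝒞 _ _ (e i : ↥𝒞).2 (e j : ↥𝒞).2 hne).mono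
                    (hIoo _ (e i : ↥𝒞).2) (hIoo _ (e j : ↥𝒞).2)
                have hlen : ∑ i, (tf i - sf i) < δ := by
                  rw [← ENNReal.ofReal_lt_ofReal_iff hδ]
                  have h1 : ENNReal.ofReal (∑ i, (tf i - sf i))
                      = ∑ i, volume (Ioo (sf i) (tf i)) := by
                    rw [ENNReal.ofReal_sum_of_nonneg fun i _ => by
                      have := (hcond i).2.1; linarith]
                    exact Finset.sum_congr rfl fun i _ => (Real.volume_Ioo).symm
                  rw [h1]
                  calc ∑ i, volume (Ioo (sf i) (tf i))
                      = volume (⋃ i, Ioo (sf i) (tf i)) := by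
                        rw [measure_iUnion (fun i j hij => hpair hij)
                          (fun i => measurableSet_Ioo), tsum_fintype]
                    _ ≤ volume V := measure_mono (iUnion_subset fun i =>
                        (hIoo _ (e i : ↥𝒞).2).trans (h𝒞V _ (e i : ↥𝒞).2))
                    _ < ENNReal.ofReal δ := hVvol
                have hfinal := hACδ n sf tf hcond hpair hlen
                calc ∑ C ∈ S', ENNReal.ofReal |f (v (C : Set ℝ)) - f (u (C : Set ℝ))|
                    = ENNReal.ofReal (∑ C ∈ S', |f (v (C : Set ℝ)) - f (u (C : Set ℝ))|) :=
                      (ENNReal.ofReal_sum_of_nonneg fun C _ => abs_nonneg _).symm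
                  _ ≤ ENNReal.ofReal ε := by
                      refine ENNReal.ofReal_le_ofReal ?_
                      refine le_of_lt (lt_of_le_of_lt (le_of_eq ?_) hfinal)
                      rw [← Finset.sum_coe_sort S' (fun C => |f (v (C : Set ℝ)) - f (u (C : Set ℝ))|)]
                      exact (Equiv.sum_comp e (fun C : {C // C ∈ S'} =>
                        |f (v ((C : ↥𝒞) : Set ℝ)) - f (u ((C : ↥𝒞) : Set ℝ))|)).symm
  refine le_antisymm ?_ zero_le
  refine ENNReal.le_of_forall_pos_le_add fun ε hε _ => ?_
  simpa using (main ε hε).trans (by simp [ENNReal.ofReal_coe_nnreal])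

lemma claim15 (f : ℝ → ℝ) (A : Set ℝ)
    (hf : ContinuousOn f (Ioo 0 1)) (hA : IsClosed A)
    (hac : ∀ a b : ℝ, a ≤ b → Icc a b ⊆ Ioo 0 1 \ A → AbsolutelyContinuousOnIcc f a b)
    (hdiff : ∀ᵐ x : ℝ, x ∈ Ioo 0 1 \ A → DifferentiableAt ℝ f x)
    (himg : volume (f '' A) = 0) {s t : ℝ} (hst : s < t) (hsub : Icc s t ⊆ Ioo 0 1) :
    ENNReal.ofReal |f t - f s| ≤ ∫⁻ x in Ioo s t \ A, ENNReal.ofReal |deriv f x| := by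
  set D := {x : ℝ | DifferentiableAt ℝ f x} with hDdef
  set S := (Ioo s t \ A) ∩ D with hSdef
  set N := (Ioo s t \ A) \ D with hNdef
  have hIoo01 : Ioo s t ⊆ Ioo 0 1 := fun x hx => hsub ⟨hx.1.le, hx.2.le⟩
  -- step 1 : |f t - f s| ≤ volume (f '' Icc s t)
  have h1 : ENNReal.ofReal |f t - f s| ≤ volume (f '' Icc s t) := by
    have hIVT : uIcc (f s) (f t) ⊆ f '' Icc s t := by
      have := intermediate_value_uIcc (f := f) (a := s) (b := t)
        (hf.mono (by rw [uIcc_of_le hst.le]; exact hsub))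
      rwa [uIcc_of_le hst.le] at this
    calc ENNReal.ofReal |f t - f s| = volume (uIcc (f s) (f t)) := Real.volume_interval.symm
      _ ≤ volume (f '' Icc s t) := measure_mono hIVT
  -- decomposition
  have hdecomp : Icc s t ⊆ ({s, t} ∪ Icc s t ∩ A) ∪ (S ∪ N) := by
    intro x hx
    by_cases hxe : x = s ∨ x = t
    · exact Or.inl (Or.inl (by rcases hxe with h | h <;> simp [h]))
    · push_neg at hxe
      have hxIoo : x ∈ Ioo s t := ⟨lt_of_le_of_ne hx.1 (Ne.symm hxe.1), lt_of_le_of_ne hx.2 hxe.2⟩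
      by_cases hxA : x ∈ A
      · exact Or.inl (Or.inr ⟨hx, hxA⟩)
      · by_cases hxD : x ∈ D
        · exact Or.inr (Or.inl ⟨⟨hxIoo, hxA⟩, hxD⟩)
        · exact Or.inr (Or.inr ⟨⟨hxIoo, hxA⟩, hxD⟩)
  -- endpoints null
  have hends : volume (f '' ({s, t} : Set ℝ)) = 0 := by
    refine measure_mono_null (image_subset_iff.2 fun x hx => ?_)
      (((Set.finite_singleton (f t)).insert (f s)).measure_zero _)
    rcases hx with h | h
    · simp [h]
    · simp [mem_singleton_iff.1 h]
  -- A part null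
  have hApart : volume (f '' (Icc s t ∩ A)) = 0 :=
    measure_mono_null (image_mono (f := f) inter_subset_right) himg
  -- S part
  have hSmeas : MeasurableSet S :=
    ((measurableSet_Ioo.diff hA.measurableSet).inter (measurableSet_of_differentiableAt ℝ f))
  have hSpart : volume (f '' S) ≤ ∫⁻ x in Ioo s t \ A, ENNReal.ofReal |deriv f x| := by
    have hb := addHaar_image_le_lintegral_abs_det_fderiv (μ := volume) hSmeas
      (f' := fun x => (1 : ℝ →L[ℝ] ℝ).smulRight (deriv f x))
      (fun x hx => (hx.2.hasDerivAt.hasDerivWithinAt).hasFDerivWithinAt)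
    simp only [ContinuousLinearMap.det_smulRight, ContinuousLinearMap.one_apply, one_mul] at hb
    exact hb.trans (lintegral_mono_set inter_subset_left)
  -- N part null
  have hNnull : volume N = 0 := by
    refine measure_mono_null (fun x hx => ?_) (ae_iff.1 hdiff)
    exact fun h => hx.2 (h ⟨hIoo01 hx.1.1, hx.1.2⟩)
  have hNpart : volume (f '' N) = 0 := by
    set W := Ioo (0:ℝ) 1 \ A with hWdef
    have hWopen : IsOpen W := isOpen_Ioo.sdiff hA
    have hNW : N ⊆ W := fun x hx => ⟨hIoo01 hx.1.1, hx.1.2⟩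
    set QQ : Set (ℚ × ℚ) := {p | Icc (p.1 : ℝ) (p.2 : ℝ) ⊆ W ∧ (p.1 : ℝ) < (p.2 : ℝ)} with hQQdef
    have hcov : N ⊆ ⋃ p ∈ QQ, Ioo (p.1 : ℝ) (p.2 : ℝ) := by
      intro x hx
      obtain ⟨r, hr, hball⟩ := Metric.isOpen_iff.1 hWopen x (hNW hx)
      obtain ⟨q₁, hq₁, hq₁'⟩ := exists_rat_btwn (by linarith : x - r < x)
      obtain ⟨q₂, hq₂, hq₂'⟩ := exists_rat_btwn (by linarith : x < x + r)
      have hIccsub : Icc (q₁ : ℝ) (q₂ : ℝ) ⊆ W := by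
        refine subset_trans ?_ hball
        rw [Real.ball_eq_Ioo]
        exact fun z hz => ⟨lt_of_lt_of_le hq₁ hz.1, lt_of_le_of_lt hz.2 hq₂'⟩
      exact mem_biUnion (⟨hIccsub, hq₁'.trans hq₂⟩ : (q₁, q₂) ∈ QQ) ⟨hq₁', hq₂⟩
    refine measure_mono_null (t := ⋃ p ∈ QQ, f '' (N ∩ Ioo (p.1:ℝ) (p.2:ℝ))) ?_ ?_
    · rintro _ ⟨x, hx, rfl⟩
      obtain ⟨p, hp, hxp⟩ := mem_iUnion₂.1 (hcov hx)
      exact mem_biUnion hp ⟨x, ⟨hx, hxp⟩, rfl⟩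
    · rw [measure_biUnion_null_iff (Set.to_countable QQ)]
      intro p hp
      exact lusinN f (hf.mono (hp.1.trans diff_subset))
        (hac p.1 p.2 hp.2.le hp.1) inter_subset_right
        (measure_mono_null inter_subset_left hNnull)
  calc ENNReal.ofReal |f t - f s| ≤ volume (f '' Icc s t) := h1
    _ ≤ volume ((f '' ({s,t} ∪ Icc s t ∩ A)) ∪ (f '' (S ∪ N))) := by
        rw [← image_union]; exact measure_mono (image_mono (f := f) hdecomp)
    _ ≤ volume (f '' ({s,t} ∪ Icc s t ∩ A)) + volume (f '' (S ∪ N)) := measure_union_le _ _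
    _ ≤ (volume (f '' ({s,t} : Set ℝ)) + volume (f '' (Icc s t ∩ A)))
        + (volume (f '' S) + volume (f '' N)) := by
        refine add_le_add ?_ ?_ <;> rw [image_union] <;> exact measure_union_le _ _
    _ ≤ ∫⁻ x in Ioo s t \ A, ENNReal.ofReal |deriv f x| := by
        rw [hends, hApart, hNpart]
        simpa using hSpart

theorem statement15 (f : ℝ → ℝ) (A : Set ℝ)
    (hf : ContinuousOn f (Ioo 0 1)) (hA : IsCompact A) (hA' : A ⊆ Ioo 0 1)
    (hac : ∀ a b : ℝ, a ≤ b → Icc a b ⊆ Ioo 0 1 \ A → AbsolutelyContinuousOnIcc f a b)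
    (hdiff : ∀ᵐ x : ℝ, x ∈ Ioo 0 1 \ A → DifferentiableAt ℝ f x)
    (hint : ∫⁻ x in Ioo 0 1 \ A, ENNReal.ofReal |deriv f x| < ⊤)
    (himg : volume (f '' A) = 0) :
    ∀ a b : ℝ, a ≤ b → Icc a b ⊆ Ioo 0 1 → AbsolutelyContinuousOnIcc f a b := by
  intro a b hab hsub ε hε
  set g : ℝ → ℝ≥0∞ := fun x => ENNReal.ofReal |deriv f x| with hgdef
  set μ₀ := volume.restrict (Ioo (0:ℝ) 1 \ A) with hμdef
  have hfin : ∫⁻ x, g x ∂μ₀ ≠ ⊤ := hint.ne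
  obtain ⟨δ', hδ'pos, hδ'⟩ := exists_pos_setLIntegral_lt_of_measure_lt (μ := μ₀) hfin
    (ε := ENNReal.ofReal ε) (ENNReal.ofReal_pos.2 hε).ne'
  obtain ⟨δ, hδpos, hδlt⟩ : ∃ δ : ℝ, 0 < δ ∧ ENNReal.ofReal δ < δ' := by
    rcases ENNReal.lt_iff_exists_real_btwn.1 hδ'pos with ⟨r, _, hr0, hrδ⟩
    exact ⟨r, ENNReal.ofReal_pos.1 hr0, hrδ⟩
  refine ⟨δ, hδpos, ?_⟩
  intro m sfun tfun hcond hdisj hsum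
  have hsubIoo : ∀ i, Icc (sfun i) (tfun i) ⊆ Ioo 0 1 := fun i =>
    (Icc_subset_Icc (hcond i).1 (hcond i).2.2).trans hsub
  have hkey : ∀ i, ENNReal.ofReal |f (tfun i) - f (sfun i)|
      ≤ ∫⁻ x in Ioo (sfun i) (tfun i) \ A, g x := fun i =>
    claim15 f A hf hA.isClosed hac hdiff himg (hcond i).2.1 (hsubIoo i)
  have hAmeas := hA.isClosed.measurableSet
  set T := ⋃ i, Ioo (sfun i) (tfun i) with hTdef
  have hTmeas : MeasurableSet T := MeasurableSet.iUnion fun i => measurableSet_Ioo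
  have hsum1 : ENNReal.ofReal (∑ i, |f (tfun i) - f (sfun i)|) ≤ ∫⁻ x in T, g x ∂μ₀ := by
    rw [ENNReal.ofReal_sum_of_nonneg (fun i _ => abs_nonneg _)]
    calc ∑ i, ENNReal.ofReal |f (tfun i) - f (sfun i)|
        ≤ ∑ i, ∫⁻ x in Ioo (sfun i) (tfun i) \ A, g x := Finset.sum_le_sum fun i _ => hkey i
      _ = ∫⁻ x in ⋃ i, (Ioo (sfun i) (tfun i) \ A), g x := by
          rw [lintegral_iUnion (fun i => measurableSet_Ioo.diff hAmeas)
            (fun i j hij => (hdisj hij).mono diff_subset diff_subset), tsum_fintype]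
      _ ≤ ∫⁻ x in T, g x ∂μ₀ := by
          rw [hμdef, Measure.restrict_restrict hTmeas]
          refine lintegral_mono_set (iUnion_subset fun i x hx => ?_)
          exact ⟨mem_iUnion.2 ⟨i, hx.1⟩, ⟨hsubIoo i ⟨hx.1.1.le, hx.1.2.le⟩, hx.2⟩⟩
  have hμT : μ₀ T < δ' := by
    have h1 : μ₀ T ≤ volume T := Measure.restrict_apply_le _ _
    have h2 : volume T ≤ ∑ i, volume (Ioo (sfun i) (tfun i)) := by
      refine le_trans (measure_iUnion_le _) (le_of_eq (tsum_fintype _))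
    have h3 : ∑ i, volume (Ioo (sfun i) (tfun i)) = ENNReal.ofReal (∑ i, (tfun i - sfun i)) := by
      rw [ENNReal.ofReal_sum_of_nonneg (fun i _ => by have := (hcond i).2.1; linarith)]
      exact Finset.sum_congr rfl fun i _ => Real.volume_Ioo
    calc μ₀ T ≤ ENNReal.ofReal (∑ i, (tfun i - sfun i)) := le_trans h1 (h2.trans h3.le)
      _ < ENNReal.ofReal δ := ENNReal.ofReal_lt_ofReal_iff hδpos |>.2 hsum
      _ < δ' := hδlt
  exact (ENNReal.ofReal_lt_ofReal_iff hε).1 (lt_of_le_of_lt hsum1 (hδ' T hμT))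
end
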